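/- arXiv:2102.07560 — 9 statements merged into one kernel-verified Lean document; each statement's English description precedes it below -/
import Mathlib

section
/- Let Φ = (G, φ) be a complex unit gain graph with n vertices, m edges and chromatic number χ, and set a(Φ) = (1/m) Σ_{edges} (1 − Re(a_{ij})). Then for every real γ, λ₁(Φ) ≤ (2m/n)·( a(Φ) − (γ−1)²(a(Φ)−1)/(χ + γ² − 1) ). -/
open Matrix BigOperators

lemma rayleigh_min {n : ℕ} {L : Matrix (Fin n) (Fin n) ℂ} (hL : L.IsHermitian)
    (k0 : Fin n) (hk0 : ∀ k, hL.eigenvalues k0 ≤ hL.eigenvalues k)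
    (x : Fin n → ℂ) :
    hL.eigenvalues k0 * (star x ⬝ᵥ x).re ≤ (star x ⬝ᵥ L *ᵥ x).re := by
  classical
  set U : Matrix (Fin n) (Fin n) ℂ := (hL.eigenvectorUnitary : Matrix (Fin n) (Fin n) ℂ) with hU
  set y : Fin n → ℂ := (star U) *ᵥ x with hy
  have hsy : star y = star x ᵥ* U := by
    rw [hy, star_mulVec]; simp [Matrix.star_eq_conjTranspose]
  have hquad : (star x ⬝ᵥ L *ᵥ x) = ∑ k, (hL.eigenvalues k : ℂ) * (star (y k) * y k) := by
    conv_lhs => rw [hL.spectral_theorem, Unitary.conjStarAlgAut_apply]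
    rw [← hU, Matrix.mul_assoc, ← mulVec_mulVec, ← mulVec_mulVec, dotProduct_mulVec, ← hsy,
      ← hy, dotProduct]
    refine Finset.sum_congr rfl fun k _ => ?_
    rw [mulVec_diagonal]
    simp [Function.comp]; ring
  have hnorm : (star x ⬝ᵥ x) = ∑ k, star (y k) * y k := by
    have h1 : star y ⬝ᵥ y = star x ⬝ᵥ x := by
      rw [hsy, hy, ← dotProduct_mulVec, mulVec_mulVec,
        (Matrix.mem_unitaryGroup_iff).mp hL.eigenvectorUnitary.2, one_mulVec]
    rw [← h1, dotProduct]
    exact Finset.sum_congr rfl fun k _ => by rw [Pi.star_apply]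
  have hterm : ∀ k, (star (y k) * y k) = (Complex.normSq (y k) : ℂ) := by
    intro k; rw [Complex.star_def, ← Complex.normSq_eq_conj_mul_self]
  rw [hquad, hnorm]
  have h1 : (∑ k, star (y k) * y k).re = ∑ k, Complex.normSq (y k) := by
    simp [hterm, Complex.normSq_apply]
  have h2 : (∑ k, (hL.eigenvalues k : ℂ) * (star (y k) * y k)).re
      = ∑ k, hL.eigenvalues k * Complex.normSq (y k) := by
    simp [hterm, ← Complex.ofReal_mul, Complex.normSq_apply]
  rw [h1, h2, Finset.mul_sum]
  exact Finset.sum_le_sum fun k _ =>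
    mul_le_mul_of_nonneg_right (hk0 k) (Complex.normSq_nonneg _)

/-- `a(Φ) = (1/m) Σ_{v_i ∼ v_j, i<j} (1 − Re(a_{ij}))`. -/
noncomputable def aPhi {n : ℕ} (G : SimpleGraph (Fin n)) [DecidableRel G.Adj]
    (A : Matrix (Fin n) (Fin n) ℂ) (m : ℕ) : ℝ :=
  (1 / (m : ℝ)) * ∑ i : Fin n, ∑ j : Fin n,
    if i < j ∧ G.Adj i j then 1 - (A i j).re else 0

/-- Chromatic-number bound for `λ₁(Φ)` with a free parameter `γ`. -/
theorem least_eigenvalue_chromatic_bound_gamma {n m χ : ℕ}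
    (G : SimpleGraph (Fin n)) [DecidableRel G.Adj]
    (A : Matrix (Fin n) (Fin n) ℂ)
    (hsym : ∀ i j, A j i = star (A i j))
    (hunit : ∀ i j, G.Adj i j → ‖A i j‖ = 1)
    (hzero : ∀ i j, ¬ G.Adj i j → A i j = 0)
    (L : Matrix (Fin n) (Fin n) ℂ)
    (hLdef : L = Matrix.diagonal (fun i => (G.degree i : ℂ)) - A)
    (hL : L.IsHermitian)
    (hm : G.edgeFinset.card = m) (hm1 : 1 ≤ m)
    (hχ : G.chromaticNumber = χ) :
    ∀ γ : ℝ,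
      ∃ k, hL.eigenvalues k ≤
        (2 * m / n) * (aPhi G A m -
          (γ - 1) ^ 2 * (aPhi G A m - 1) / (χ + γ ^ 2 - 1)) := by
  classical
  intro γ
  -- an edge exists
  have hne : G.edgeFinset.Nonempty := by
    rw [← Finset.card_pos, hm]; omega
  obtain ⟨e, he⟩ := hne
  rw [SimpleGraph.mem_edgeFinset] at he
  obtain ⟨u, v, huv⟩ : ∃ u v, G.Adj u v := by
    revert he
    refine Sym2.ind (fun u v h => ⟨u, v, h⟩) e
  -- coloring
  have hcol : G.Colorable χ := SimpleGraph.chromaticNumber_le_iff_colorable.mp (by rw [hχ])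
  obtain ⟨C⟩ := hcol
  have hχ2 : 2 ≤ χ := by
    have h := Fintype.one_lt_card_iff_nontrivial.mpr ⟨C u, C v, C.valid huv⟩
    exact (by simpa [Fintype.card_fin] using h : 1 < χ)
  set a : ℝ := aPhi G A m with ha
  set d : ℝ := (χ:ℝ) + γ^2 - 1 with hd
  have hd0 : 0 < d := by
    have h2 : (2:ℝ) ≤ (χ:ℝ) := by exact_mod_cast hχ2
    nlinarith [sq_nonneg γ]
  have hn0 : (0:ℝ) < n := by
    have := u.isLt
    have : 0 < n := Nat.pos_of_ne_zero (by omega)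
    exact_mod_cast this
  have hm0 : (0:ℝ) < m := by exact_mod_cast hm1
  -- minimal eigenvalue
  obtain ⟨k0, -, hk0⟩ := Finset.exists_min_image Finset.univ hL.eigenvalues
    ⟨u, Finset.mem_univ u⟩
  refine ⟨k0, ?_⟩
  -- the test vectors
  set x : Fin χ → Fin n → ℂ := fun t i => (((if C i = t then γ else 1 : ℝ)) : ℂ) with hx
  -- F1
  have F1 : ∀ i, ∑ t, Complex.normSq (x t i) = d := by
    intro i
    have h : ∀ t, Complex.normSq (x t i)
        = 1 + (if C i = t then γ*γ - 1 else 0) := by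
      intro t
      rw [hx]; simp only [Complex.normSq_ofReal]
      split_ifs <;> ring
    rw [Finset.sum_congr rfl fun t _ => h t, Finset.sum_add_distrib,
      Finset.sum_ite_eq, Finset.sum_const]
    simp [hd]; ring
  -- F2
  have F2 : ∀ i j, G.Adj i j → ∑ t, (star (x t i) * A i j * x t j).re
      = (2*γ + (χ:ℝ) - 2) * (A i j).re := by
    intro i j hij
    have hCij : C i ≠ C j := C.valid hij
    have hterm : ∀ t, (star (x t i) * A i j * x t j).re
        = ((if C i = t then γ else 1) * (if C j = t then γ else 1)) * (A i j).re := by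
      intro t
      rw [hx]
      set r : ℝ := if C i = t then γ else 1
      set s : ℝ := if C j = t then γ else 1
      have h : (star (r:ℂ)) * A i j * (s:ℂ) = ((r*s : ℝ) : ℂ) * A i j := by
        rw [Complex.star_def, Complex.conj_ofReal]; push_cast; ring
      rw [h, Complex.re_ofReal_mul]
    rw [Finset.sum_congr rfl fun t _ => hterm t, ← Finset.sum_mul]
    congr 1
    have hpt : ∀ t, (if C i = t then γ else 1) * (if C j = t then γ else 1)
        = 1 + ((if C i = t then γ - 1 else 0) + (if C j = t then γ - 1 else 0)) := by
      intro t
      split_ifs with h1 h2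
      · exact absurd (h1.trans h2.symm) hCij
      · ring
      · ring
      · ring
    rw [Finset.sum_congr rfl fun t _ => hpt t, Finset.sum_add_distrib,
      Finset.sum_add_distrib, Finset.sum_ite_eq, Finset.sum_ite_eq, Finset.sum_const]
    simp; ring
  have F2all : ∀ i j, ∑ t, (star (x t i) * A i j * x t j).re
      = (2*γ + (χ:ℝ) - 2) * (A i j).re := by
    intro i j
    by_cases hij : G.Adj i j
    · exact F2 i j hij
    · rw [hzero i j hij]
      simp
  -- degree sum
  have F4 : (∑ i, (G.degree i : ℝ)) = 2*m := by
    have h := G.sum_degrees_eq_twice_card_edges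
    rw [hm] at h
    exact_mod_cast h
  -- counting ordered adjacent pairs
  have F3a : (∑ i : Fin n, ∑ j : Fin n, (if G.Adj i j then (1:ℝ) else 0)) = 2*m := by
    rw [← F4]
    refine Finset.sum_congr rfl fun i _ => ?_
    rw [Finset.sum_boole]
    congr 1
    rw [SimpleGraph.degree, SimpleGraph.neighborFinset_eq_filter]
  -- symmetrization
  set f : Fin n → Fin n → ℝ := fun i j => if G.Adj i j then 1 - (A i j).re else 0 with hf
  have hsymf : ∀ i j, f j i = f i j := by
    intro i j
    simp only [hf]
    by_cases hij : G.Adj i j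
    · rw [if_pos hij, if_pos (G.adj_symm hij), hsym, Complex.star_def, Complex.conj_re]
    · rw [if_neg hij, if_neg (fun h => hij (G.adj_symm h))]
  have F3b : (∑ i : Fin n, ∑ j : Fin n, f i j) = 2*(m*a) := by
    have hpt : ∀ i j : Fin n, f i j
        = (if i < j then f i j else 0) + (if j < i then f i j else 0) := by
      intro i j
      rcases lt_trichotomy i j with h | h | h
      · rw [if_pos h, if_neg (asymm h)]; ring
      · subst h
        simp [hf, G.irrefl]
      · rw [if_neg (asymm h), if_pos h]; ring
    have hsplit : (∑ i : Fin n, ∑ j : Fin n, f i j)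
        = (∑ i : Fin n, ∑ j : Fin n, (if i < j then f i j else 0))
          + ∑ i : Fin n, ∑ j : Fin n, (if j < i then f i j else 0) := by
      rw [← Finset.sum_add_distrib]
      refine Finset.sum_congr rfl fun i _ => ?_
      rw [← Finset.sum_add_distrib]
      exact Finset.sum_congr rfl fun j _ => hpt i j
    have hswap : (∑ i : Fin n, ∑ j : Fin n, (if j < i then f i j else 0))
        = ∑ i : Fin n, ∑ j : Fin n, (if i < j then f i j else 0) := by
      rw [Finset.sum_comm]
      refine Finset.sum_congr rfl fun i _ => Finset.sum_congr rfl fun j _ => ?_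
      by_cases h : i < j
      · rw [if_pos h, if_pos h, hsymf]
      · rw [if_neg h, if_neg h]
    have hT : (∑ i : Fin n, ∑ j : Fin n, (if i < j then f i j else 0)) = m * a := by
      rw [ha, aPhi]
      have hpt2 : ∀ i j : Fin n, (if i < j ∧ G.Adj i j then 1 - (A i j).re else 0)
          = (if i < j then f i j else 0) := by
        intro i j
        rw [hf]
        by_cases h1 : i < j <;> by_cases h2 : G.Adj i j <;>
          simp [h1, h2]
      rw [Finset.sum_congr rfl fun i _ => Finset.sum_congr rfl fun j _ => hpt2 i j]
      field_simp
    rw [hsplit, hswap, hT]; ring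
  have F3 : (∑ i : Fin n, ∑ j : Fin n, (A i j).re) = 2*m - 2*(m*a) := by
    have hpt : ∀ i j : Fin n, (A i j).re = (if G.Adj i j then (1:ℝ) else 0) - f i j := by
      intro i j
      simp only [hf]
      by_cases hij : G.Adj i j
      · rw [if_pos hij, if_pos hij]; ring
      · rw [if_neg hij, if_neg hij, hzero i j hij]; simp
    rw [Finset.sum_congr rfl fun i _ => Finset.sum_congr rfl fun j _ => hpt i j]
    rw [← F3a, ← F3b] at *
    simp only [Finset.sum_sub_distrib]
  -- norms
  have H2 : (∑ t, (star (x t) ⬝ᵥ x t).re) = n * d := by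
    have h1 : ∀ t, (star (x t) ⬝ᵥ x t).re = ∑ i, Complex.normSq (x t i) := by
      intro t
      rw [dotProduct, Complex.re_sum]
      refine Finset.sum_congr rfl fun i _ => ?_
      rw [Pi.star_apply, Complex.star_def, ← Complex.normSq_eq_conj_mul_self,
        Complex.ofReal_re]
    rw [Finset.sum_congr rfl fun t _ => h1 t, Finset.sum_comm,
      Finset.sum_congr rfl fun i _ => F1 i, Finset.sum_const]
    simp [mul_comm]
  -- quadratic form expansion
  have Hquad : ∀ t, (star (x t) ⬝ᵥ L *ᵥ (x t))
      = (∑ i, (G.degree i : ℂ) * (star (x t i) * x t i))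
        - ∑ i, ∑ j, star (x t i) * A i j * x t j := by
    intro t
    rw [hLdef, sub_mulVec, dotProduct_sub]
    congr 1
    · rw [dotProduct]
      refine Finset.sum_congr rfl fun i _ => ?_
      rw [mulVec_diagonal, Pi.star_apply]; ring
    · rw [dotProduct]
      refine Finset.sum_congr rfl fun i _ => ?_
      rw [Matrix.mulVec, dotProduct, Finset.mul_sum, Pi.star_apply]
      exact Finset.sum_congr rfl fun j _ => by ring
  have H3 : (∑ t, (star (x t) ⬝ᵥ L *ᵥ (x t)).re)
      = d*(2*m) - (2*γ + (χ:ℝ) - 2) * (2*m - 2*(m*a)) := by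
    have h1 : ∀ t, (star (x t) ⬝ᵥ L *ᵥ (x t)).re
        = (∑ i, (G.degree i : ℝ) * Complex.normSq (x t i))
          - ∑ i, ∑ j, (star (x t i) * A i j * x t j).re := by
      intro t
      rw [Hquad t, Complex.sub_re, Complex.re_sum, Complex.re_sum]
      congr 1
      · refine Finset.sum_congr rfl fun i _ => ?_
        have h2 : star (x t i) * x t i = (Complex.normSq (x t i) : ℂ) := by
          rw [Complex.star_def, ← Complex.normSq_eq_conj_mul_self]
        rw [h2, ← Complex.ofReal_natCast, ← Complex.ofReal_mul, Complex.ofReal_re]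
      · exact Finset.sum_congr rfl fun i _ => (Complex.re_sum _ _).symm ▸ rfl
    rw [Finset.sum_congr rfl fun t _ => h1 t, Finset.sum_sub_distrib]
    congr 1
    · rw [Finset.sum_comm]
      have h3 : ∀ i, (∑ t, (G.degree i : ℝ) * Complex.normSq (x t i))
          = (G.degree i : ℝ) * d := by
        intro i; rw [← Finset.mul_sum, F1]
      rw [Finset.sum_congr rfl fun i _ => h3 i, ← Finset.sum_mul, F4]; ring
    · rw [Finset.sum_comm]
      have h4 : ∀ i, (∑ t, ∑ j, (star (x t i) * A i j * x t j).re)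
          = ∑ j, (2*γ + (χ:ℝ) - 2) * (A i j).re := by
        intro i
        rw [Finset.sum_comm]
        exact Finset.sum_congr rfl fun j _ => F2all i j
      rw [Finset.sum_congr rfl fun i _ => h4 i]
      simp only [← Finset.mul_sum]
      rw [F3]
  -- combine
  have key : hL.eigenvalues k0 * ((n:ℝ)*d)
      ≤ d*(2*m) - (2*γ + (χ:ℝ) - 2) * (2*m - 2*(m*a)) := by
    rw [← H3, ← H2, Finset.mul_sum]
    exact Finset.sum_le_sum fun t _ =>
      rayleigh_min hL k0 (fun k => hk0 k (Finset.mem_univ k)) (x t)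
  have heq : (2 * (m:ℝ) / n) * (a - (γ - 1) ^ 2 * (a - 1) / d)
      = (d*(2*m) - (2*γ + (χ:ℝ) - 2) * (2*m - 2*(m*a))) / ((n:ℝ)*d) := by
    have hd' : (χ:ℝ) + γ^2 - 1 ≠ 0 := hd0.ne'
    rw [hd]
    field_simp
    ring
  rw [heq, le_div_iff₀ (by positivity)]
  exact key
end

section
/- Let G be a graph with n vertices, m edges and chromatic number χ. The least eigenvalue λ₁(−) of the signless Laplacian Q(G) = D(G) + A(G) satisfies λ₁(−) ≤ (2m/n)·(1 − 1/(χ−1)). -/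
open Matrix BigOperators Finset

lemma rayleigh_lower {N : ℕ} {Q : Matrix (Fin N) (Fin N) ℝ} (hQ : Q.IsHermitian)
    {μ : ℝ} (hμ : ∀ i, μ ≤ hQ.eigenvalues i) (x : Fin N → ℝ) :
    μ * (x ⬝ᵥ x) ≤ x ⬝ᵥ Q *ᵥ x := by
  set U : Matrix (Fin N) (Fin N) ℝ := (hQ.eigenvectorUnitary : Matrix (Fin N) (Fin N) ℝ) with hU
  have hUU : U * star U = 1 := (Matrix.mem_unitaryGroup_iff).mp hQ.eigenvectorUnitary.2
  have hpsd : (Q - μ • (1 : Matrix (Fin N) (Fin N) ℝ)).PosSemidef := by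
    have hdiag : Q - μ • (1 : Matrix (Fin N) (Fin N) ℝ) =
        U * Matrix.diagonal (fun i => hQ.eigenvalues i - μ) * Uᴴ := by
      conv_lhs => rw [hQ.spectral_theorem]
      rw [Unitary.conjStarAlgAut_apply, ← hU]
      have h1 : (μ • (1 : Matrix (Fin N) (Fin N) ℝ)) = U * (μ • (1 : Matrix (Fin N) (Fin N) ℝ)) * star U := by
        rw [mul_smul_comm, mul_one, smul_mul_assoc, hUU]
      rw [Matrix.star_eq_conjTranspose] at h1 ⊢
      conv_lhs => rw [h1]
      rw [← sub_mul, ← mul_sub, Matrix.smul_one_eq_diagonal, Matrix.diagonal_sub]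
      simp [hU, RCLike.ofReal]
    rw [hdiag]
    exact (Matrix.posSemidef_diagonal_iff.mpr (fun i => sub_nonneg.mpr (hμ i))).mul_mul_conjTranspose_same U
  have h2 := hpsd.dotProduct_mulVec_nonneg x
  have h3 : star x = x := by simp
  rw [h3, sub_mulVec, dotProduct_sub, smul_mulVec, one_mulVec, dotProduct_smul] at h2
  rw [smul_eq_mul] at h2
  linarith

/-- The least eigenvalue of the signless Laplacian `Q(G) = D(G) + A(G)` satisfies
`λ₁(−) ≤ (2m/n)(1 − 1/(χ−1))`. -/
theorem signless_laplacian_least_eigenvalue_chromatic_bound {n m χ : ℕ}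
    (G : SimpleGraph (Fin n)) [DecidableRel G.Adj]
    (Q : Matrix (Fin n) (Fin n) ℝ)
    (hQdef : Q = Matrix.diagonal (fun i => (G.degree i : ℝ)) + G.adjMatrix ℝ)
    (hQ : Q.IsHermitian)
    (hm : G.edgeFinset.card = m) (hm1 : 1 ≤ m)
    (hχ : G.chromaticNumber = χ) (hχ2 : 2 ≤ χ) :
    ∃ k, hQ.eigenvalues k ≤ (2 * m / n) * (1 - 1 / ((χ : ℝ) - 1)) := by
  classical
  -- a coloring with χ colors
  have hcol : G.Colorable χ := SimpleGraph.chromaticNumber_le_iff_colorable.mp (le_of_eq hχ)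
  obtain ⟨C⟩ := hcol
  -- n is positive
  have hn : 0 < n := by
    obtain ⟨e, he⟩ := Finset.card_pos.mp (by rw [hm]; exact hm1)
    exact Fin.pos_iff_nonempty.mpr ⟨e.out.1⟩
  -- the minimal eigenvalue
  obtain ⟨k, -, hk⟩ := Finset.exists_min_image Finset.univ hQ.eigenvalues
    ⟨⟨0, hn⟩, Finset.mem_univ _⟩
  refine ⟨k, ?_⟩
  set μ := hQ.eigenvalues k with hμdef
  -- the test vectors
  set x : Fin χ → Fin χ → Fin n → ℝ :=
    fun a b v => if C v = a then 1 else if C v = b then -1 else 0 with hxdef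
  -- cast facts
  have hχR : (2 : ℝ) ≤ (χ : ℝ) := by exact_mod_cast hχ2
  have hχ1 : (0 : ℝ) < (χ : ℝ) - 1 := by linarith
  have hnR : (0 : ℝ) < (n : ℝ) := by exact_mod_cast hn
  -- square formula
  have fact1 : ∀ a b : Fin χ, a ≠ b → ∀ v, x a b v * x a b v =
      (if C v = a then (1:ℝ) else 0) + (if C v = b then 1 else 0) := by
    intro a b hab v
    by_cases h1 : C v = a <;> by_cases h2 : C v = b
    · exact absurd (h1.symm.trans h2) hab
    all_goals simp [hxdef, h1, h2, hab, Ne.symm hab]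
  -- per-vertex sum
  have pervertex : ∀ v, ∑ a, ∑ b ∈ Finset.univ.erase a, (x a b v * x a b v)
      = 2 * ((χ : ℝ) - 1) := by
    intro v
    have : ∀ a : Fin χ, ∑ b ∈ Finset.univ.erase a, (x a b v * x a b v)
        = ((χ : ℝ) - 1) * (if C v = a then 1 else 0) + (if C v ∈ Finset.univ.erase a then (1:ℝ) else 0) := by
      intro a
      rw [Finset.sum_congr rfl (fun b hb => fact1 a b (fun h => (Finset.mem_erase.mp hb).1 h.symm) v)]
      rw [Finset.sum_add_distrib, Finset.sum_const, Finset.card_erase_of_mem (Finset.mem_univ a)]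
      rw [Finset.sum_ite_eq (Finset.univ.erase a) (C v) (fun _ => (1:ℝ))]
      congr 1
      rw [nsmul_eq_mul]
      congr 1
      simp [Nat.cast_sub (by omega : 1 ≤ χ)]
    rw [Finset.sum_congr rfl (fun a _ => this a)]
    rw [Finset.sum_add_distrib]
    have e1 : ∑ a, ((χ : ℝ) - 1) * (if C v = a then 1 else 0) = (χ : ℝ) - 1 := by
      rw [← Finset.mul_sum, Finset.sum_ite_eq Finset.univ (C v) (fun _ => (1:ℝ))]
      simp
    have e2 : ∑ a, (if C v ∈ Finset.univ.erase a then (1:ℝ) else 0) = (χ : ℝ) - 1 := by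
      have : ∀ a : Fin χ, (if C v ∈ Finset.univ.erase a then (1:ℝ) else 0)
          = 1 - (if C v = a then 1 else 0) := by
        intro a
        by_cases h : C v = a <;> simp [Finset.mem_erase, h]
      rw [Finset.sum_congr rfl (fun a _ => this a), Finset.sum_sub_distrib,
        Finset.sum_const, Finset.sum_ite_eq Finset.univ (C v) (fun _ => (1:ℝ))]
      simp
    rw [e1, e2]; ring
  -- per-edge sum
  have peredge : ∀ u v, G.Adj u v →
      ∑ a, ∑ b ∈ Finset.univ.erase a, (x a b u * x a b v) = -2 := by
    intro u v huv
    have hne : C u ≠ C v := C.valid huv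
    have fact2 : ∀ a b : Fin χ, a ≠ b → x a b u * x a b v =
        (if C u = a ∧ C v = b then (-1:ℝ) else 0) + (if C u = b ∧ C v = a then -1 else 0) := by
      intro a b hab
      by_cases h1 : C u = a <;> by_cases h2 : C u = b <;>
        by_cases h3 : C v = a <;> by_cases h4 : C v = b <;>
        first
          | exact absurd (h1.symm.trans h2) hab
          | exact absurd (h3.symm.trans h4) hab
          | exact absurd (h1.trans h3.symm) hne
          | exact absurd (h2.trans h4.symm) hne
          | simp [hxdef, h1, h2, h3, h4, hab, Ne.symm hab]
    have inner : ∀ a : Fin χ, ∑ b ∈ Finset.univ.erase a, (x a b u * x a b v)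
        = (if C u = a then (-1:ℝ) else 0) + (if C v = a then -1 else 0) := by
      intro a
      rw [Finset.sum_congr rfl (fun b hb => fact2 a b (fun h => (Finset.mem_erase.mp hb).1 h.symm))]
      rw [Finset.sum_add_distrib]
      congr 1
      · by_cases h : C u = a
        · simp only [h, true_and]
          rw [Finset.sum_ite_eq (Finset.univ.erase a) (C v) (fun _ => (-1:ℝ))]
          have : C v ∈ Finset.univ.erase a := by
            simp [Finset.mem_erase]; rw [← h]; exact hne.symm
          simp [this]
        · simp [h]
      · by_cases h : C v = a
        · simp only [h, and_true]
          rw [Finset.sum_ite_eq (Finset.univ.erase a) (C u) (fun _ => (-1:ℝ))]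
          have : C u ∈ Finset.univ.erase a := by
            simp [Finset.mem_erase]; rw [← h]; exact hne
          simp [this]
        · simp [h]
    rw [Finset.sum_congr rfl (fun a _ => inner a), Finset.sum_add_distrib,
      Finset.sum_ite_eq Finset.univ (C u) (fun _ => (-1:ℝ)),
      Finset.sum_ite_eq Finset.univ (C v) (fun _ => (-1:ℝ))]
    norm_num
  -- quadratic form expansion
  have hquad : ∀ y : Fin n → ℝ, y ⬝ᵥ Q *ᵥ y =
      ∑ v, (G.degree v : ℝ) * (y v * y v) +
        ∑ u, ∑ v, (if G.Adj u v then y u * y v else 0) := by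
    intro y
    rw [hQdef, add_mulVec, dotProduct_add]
    congr 1
    · simp only [dotProduct, mulVec_diagonal]
      exact Finset.sum_congr rfl (fun v _ => by ring)
    · simp only [dotProduct, Matrix.mulVec, dotProduct, SimpleGraph.adjMatrix_apply,
        Finset.mul_sum]
      refine Finset.sum_congr rfl (fun u _ => Finset.sum_congr rfl (fun v _ => ?_))
      split_ifs <;> ring
  -- degree sums
  have hdeg : ∑ v, (G.degree v : ℝ) = 2 * m := by
    rw [← hm]
    exact_mod_cast congrArg (Nat.cast : ℕ → ℝ) G.sum_degrees_eq_twice_card_edges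
  have hdegsum : ∀ u, ∑ v, (if G.Adj u v then (1:ℝ) else 0) = (G.degree u : ℝ) := by
    intro u
    rw [Finset.sum_boole]
    congr 1
    rw [SimpleGraph.degree, SimpleGraph.neighborFinset_eq_filter]
  -- the main inequality, summed over pairs of colors
  have key : ∑ a, ∑ b ∈ Finset.univ.erase a, μ * (x a b ⬝ᵥ x a b)
      ≤ ∑ a, ∑ b ∈ Finset.univ.erase a, (x a b ⬝ᵥ Q *ᵥ x a b) :=
    Finset.sum_le_sum (fun a _ => Finset.sum_le_sum (fun b _ =>
      rayleigh_lower hQ (fun i => hk i (Finset.mem_univ i)) (x a b)))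
  -- compute LHS
  have hLHS : ∑ a, ∑ b ∈ Finset.univ.erase a, μ * (x a b ⬝ᵥ x a b)
      = μ * (2 * ((χ:ℝ) - 1) * n) := by
    calc ∑ a, ∑ b ∈ Finset.univ.erase a, μ * (x a b ⬝ᵥ x a b)
        = μ * ∑ a, ∑ b ∈ Finset.univ.erase a, ∑ v, x a b v * x a b v := by
          rw [Finset.mul_sum]
          refine Finset.sum_congr rfl fun a _ => ?_
          rw [Finset.mul_sum]
          exact Finset.sum_congr rfl fun b _ => rfl
      _ = μ * ∑ v, ∑ a, ∑ b ∈ Finset.univ.erase a, x a b v * x a b v := by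
          congr 1
          rw [show (∑ a, ∑ b ∈ Finset.univ.erase a, ∑ v, x a b v * x a b v)
              = ∑ a, ∑ v, ∑ b ∈ Finset.univ.erase a, x a b v * x a b v from
            Finset.sum_congr rfl fun a _ => Finset.sum_comm]
          exact Finset.sum_comm
      _ = μ * (2 * ((χ:ℝ) - 1) * n) := by
          rw [Finset.sum_congr rfl (fun v _ => pervertex v), Finset.sum_const]
          simp [Finset.card_univ, mul_comm]
  -- compute RHS
  have hRHS : ∑ a, ∑ b ∈ Finset.univ.erase a, (x a b ⬝ᵥ Q *ᵥ x a b)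
      = 2 * ((χ:ℝ) - 1) * (2 * m) + (-2) * (2 * m) := by
    rw [Finset.sum_congr rfl (fun a _ => Finset.sum_congr rfl (fun b _ => hquad (x a b)))]
    rw [Finset.sum_congr rfl (fun a (_ : a ∈ Finset.univ) => Finset.sum_add_distrib),
      Finset.sum_add_distrib]
    congr 1
    · -- degree part
      calc ∑ a, ∑ b ∈ Finset.univ.erase a, ∑ v, (G.degree v : ℝ) * (x a b v * x a b v)
          = ∑ v, ∑ a, ∑ b ∈ Finset.univ.erase a, (G.degree v : ℝ) * (x a b v * x a b v) := by
            rw [show (∑ a, ∑ b ∈ Finset.univ.erase a, ∑ v, (G.degree v : ℝ) * (x a b v * x a b v))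
                = ∑ a, ∑ v, ∑ b ∈ Finset.univ.erase a, (G.degree v : ℝ) * (x a b v * x a b v) from
              Finset.sum_congr rfl fun a _ => Finset.sum_comm]
            exact Finset.sum_comm
        _ = ∑ v, (G.degree v : ℝ) * (2 * ((χ:ℝ) - 1)) := by
            refine Finset.sum_congr rfl fun v _ => ?_
            rw [← pervertex v, Finset.mul_sum]
            exact Finset.sum_congr rfl fun a _ => (Finset.mul_sum _ _ _).symm
        _ = 2 * ((χ:ℝ) - 1) * (2 * m) := by
            rw [← Finset.sum_mul, hdeg]; ring
    · -- adjacency part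
      calc ∑ a, ∑ b ∈ Finset.univ.erase a, ∑ u, ∑ v, (if G.Adj u v then x a b u * x a b v else 0)
          = ∑ u, ∑ v, ∑ a, ∑ b ∈ Finset.univ.erase a, (if G.Adj u v then x a b u * x a b v else 0) := by
            rw [show (∑ a, ∑ b ∈ Finset.univ.erase a, ∑ u, ∑ v, (if G.Adj u v then x a b u * x a b v else 0))
                = ∑ u, ∑ a, ∑ b ∈ Finset.univ.erase a, ∑ v, (if G.Adj u v then x a b u * x a b v else 0) from
              (Finset.sum_congr rfl fun a _ => Finset.sum_comm).trans Finset.sum_comm]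
            refine Finset.sum_congr rfl fun u _ => ?_
            rw [show (∑ a, ∑ b ∈ Finset.univ.erase a, ∑ v, (if G.Adj u v then x a b u * x a b v else 0))
                = ∑ a, ∑ v, ∑ b ∈ Finset.univ.erase a, (if G.Adj u v then x a b u * x a b v else 0) from
              Finset.sum_congr rfl fun a _ => Finset.sum_comm]
            exact Finset.sum_comm
        _ = ∑ u, ∑ v, (if G.Adj u v then (-2:ℝ) else 0) := by
            refine Finset.sum_congr rfl fun u _ => Finset.sum_congr rfl fun v _ => ?_
            by_cases h : G.Adj u v
            · simp only [h, if_true]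
              exact peredge u v h
            · simp [h]
        _ = (-2) * (2 * m) := by
            rw [show (∑ u, ∑ v, (if G.Adj u v then (-2:ℝ) else 0))
                = ∑ u, (-2) * ∑ v, (if G.Adj u v then (1:ℝ) else 0) from
              Finset.sum_congr rfl fun u _ => by
                rw [Finset.mul_sum]
                exact Finset.sum_congr rfl fun v _ => by split_ifs <;> ring]
            rw [Finset.sum_congr rfl fun u _ => by rw [hdegsum u], ← Finset.mul_sum, hdeg]
  -- conclude
  have hc : (0:ℝ) < 2 * ((χ:ℝ) - 1) * n := by positivity
  have hBc : (2 * (m:ℝ) / n) * (1 - 1 / ((χ:ℝ) - 1)) * (2 * ((χ:ℝ) - 1) * n)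
      = 2 * ((χ:ℝ) - 1) * (2 * m) + (-2) * (2 * m) := by
    field_simp
    ring
  rw [hLHS, hRHS] at key
  exact le_of_mul_le_mul_right (by rw [hBc]; exact key) hc
end

section
/- Let Φ = (G, φ) be a connected nonempty complex unit gain graph. Then λ₁(Φ) ≤ min over edges v_s ∼ v_t of (d_s + d_t − 2)/2, where d_s denotes the degree of v_s. -/
open Matrix BigOperators

set_option linter.unusedVariables false

lemma rayleigh_lower_bound {n : ℕ} (L : Matrix (Fin n) (Fin n) ℂ) (hL : L.IsHermitian)
    (c : ℝ) (hc : ∀ i, c ≤ hL.eigenvalues i) (x : Fin n → ℂ) :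
    c * (star x ⬝ᵥ x).re ≤ (star x ⬝ᵥ (L *ᵥ x)).re := by
  set U : Matrix (Fin n) (Fin n) ℂ := (hL.eigenvectorUnitary : Matrix (Fin n) (Fin n) ℂ) with hU
  set y : Fin n → ℂ := star U *ᵥ x with hy
  have hUU : U * star U = 1 := (Matrix.mem_unitaryGroup_iff).mp hL.eigenvectorUnitary.2
  have hstary : star y = star x ᵥ* U := by
    rw [hy, star_mulVec, Matrix.star_eq_conjTranspose, conjTranspose_conjTranspose]
  have key : star x ⬝ᵥ (L *ᵥ x)
      = star y ⬝ᵥ (Matrix.diagonal ((RCLike.ofReal : ℝ → ℂ) ∘ hL.eigenvalues) *ᵥ y) := by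
    conv_lhs => rw [hL.spectral_theorem]
    rw [Unitary.conjStarAlgAut_apply, ← Matrix.mulVec_mulVec, ← Matrix.mulVec_mulVec, Matrix.dotProduct_mulVec (star x) U,
      hstary]
  have hnorm : star y ⬝ᵥ y = star x ⬝ᵥ x := by
    rw [hstary, hy, Matrix.dotProduct_mulVec, Matrix.vecMul_vecMul, hUU, Matrix.vecMul_one]
  have hsum : (star y ⬝ᵥ (Matrix.diagonal ((RCLike.ofReal : ℝ → ℂ) ∘ hL.eigenvalues) *ᵥ y)).re
      = ∑ i, hL.eigenvalues i * Complex.normSq (y i) := by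
    rw [dotProduct, Complex.re_sum]
    refine Finset.sum_congr rfl fun i _ => ?_
    rw [Matrix.mulVec_diagonal]
    simp only [Function.comp_apply, Pi.star_apply, RCLike.star_def]
    have h1 : (starRingEnd ℂ) (y i) * ((RCLike.ofReal (hL.eigenvalues i) : ℂ) * y i)
        = (hL.eigenvalues i : ℂ) * Complex.normSq (y i) := by
      rw [Complex.normSq_eq_conj_mul_self]
      simp only [RCLike.ofReal, Complex.coe_algebraMap]
      ring
    rw [h1]
    simp
  have hsum2 : (star y ⬝ᵥ y).re = ∑ i, Complex.normSq (y i) := by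
    rw [dotProduct, Complex.re_sum]
    refine Finset.sum_congr rfl fun i _ => ?_
    simp [Pi.star_apply, Complex.normSq_apply, Complex.mul_re]
  rw [key, hsum, ← hnorm, hsum2, Finset.mul_sum]
  exact Finset.sum_le_sum fun i _ => by
    have := Complex.normSq_nonneg (y i)
    nlinarith [hc i]

/-- For a connected nonempty gain graph, `λ₁(Φ) ≤ (d_s + d_t − 2)/2` for every edge `v_s ∼ v_t`. -/
theorem least_eigenvalue_degree_bound {n : ℕ}
    (G : SimpleGraph (Fin n)) [DecidableRel G.Adj]
    (A : Matrix (Fin n) (Fin n) ℂ)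
    (hsym : ∀ i j, A j i = star (A i j))
    (hunit : ∀ i j, G.Adj i j → ‖A i j‖ = 1)
    (hzero : ∀ i j, ¬ G.Adj i j → A i j = 0)
    (L : Matrix (Fin n) (Fin n) ℂ)
    (hLdef : L = Matrix.diagonal (fun i => (G.degree i : ℂ)) - A)
    (hL : L.IsHermitian)
    (hconn : G.Connected) :
    ∀ s t, G.Adj s t →
      ∃ k, hL.eigenvalues k ≤ ((G.degree s : ℝ) + G.degree t - 2) / 2 := by
  intro s t hst
  have hne : s ≠ t := G.ne_of_adj hst
  obtain ⟨k, -, hk⟩ := Finset.exists_min_image Finset.univ hL.eigenvalues ⟨s, Finset.mem_univ s⟩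
  refine ⟨k, ?_⟩
  have hc : ∀ i, hL.eigenvalues k ≤ hL.eigenvalues i := fun i => hk i (Finset.mem_univ i)
  -- test vector
  set w : ℂ := star (A s t) with hw
  set x : Fin n → ℂ := fun i => if i = s then 1 else if i = t then w else 0 with hx
  have hAst : A s t * w = 1 := by
    rw [hw, RCLike.star_def, Complex.mul_conj]
    norm_cast
    rw [Complex.normSq_eq_norm_sq, hunit s t hst]
    norm_num
  have hwC : w * star w = 1 := by
    rw [hw, star_star]
    rw [mul_comm]
    exact hAst
  have hAss : A s s = 0 := hzero s s (G.irrefl)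
  have hAtt : A t t = 0 := hzero t t (G.irrefl)
  -- norm of x : star x ⬝ᵥ x = 2
  have hxx : (star x ⬝ᵥ x).re = 2 := by
    rw [dotProduct]
    rw [show (∑ i, (star x) i * x i) = ∑ i, star (x i) * x i from rfl]
    rw [Finset.sum_eq_add_of_mem s t (Finset.mem_univ s) (Finset.mem_univ t) hne ?_]
    · simp only [hx, if_pos rfl, if_neg (Ne.symm hne), if_true, eq_self_iff_true, star_one,
        one_mul]
      rw [show star w * w = w * star w by ring, hwC]
      norm_num
    · intro i _ hi
      simp only [hx, if_neg hi.1, if_neg hi.2, mul_zero]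
  -- quadratic form value
  have hform : (star x ⬝ᵥ (L *ᵥ x)).re = (G.degree s : ℝ) + G.degree t - 2 := by
    have hLx : ∀ i, (L *ᵥ x) i = L i s + L i t * w := by
      intro i
      rw [Matrix.mulVec, dotProduct]
      rw [Finset.sum_eq_add_of_mem s t (Finset.mem_univ s) (Finset.mem_univ t) hne ?_]
      · simp only [hx, if_pos rfl, if_neg (Ne.symm hne), if_true, eq_self_iff_true, mul_one]
      · intro j _ hj
        simp only [hx, if_neg hj.1, if_neg hj.2, mul_zero]
    have hLss : L s s = (G.degree s : ℂ) := by
      simp [hLdef, hAss]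
    have hLtt : L t t = (G.degree t : ℂ) := by
      simp [hLdef, hAtt]
    have hLst : L s t = -A s t := by
      simp [hLdef, Matrix.diagonal_apply_ne _ hne]
    have hLts : L t s = -w := by
      simp [hLdef, Matrix.diagonal_apply_ne _ (Ne.symm hne), hsym s t, hw]
    have : star x ⬝ᵥ (L *ᵥ x) = ((G.degree s : ℂ) + G.degree t - 2 : ℂ) := by
      rw [dotProduct]
      rw [show (∑ i, (star x) i * (L *ᵥ x) i) = ∑ i, star (x i) * (L *ᵥ x) i from rfl]
      rw [Finset.sum_eq_add_of_mem s t (Finset.mem_univ s) (Finset.mem_univ t) hne ?_]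
      · rw [hLx s, hLx t]
        simp only [hx, if_pos rfl, if_neg (Ne.symm hne), if_true, eq_self_iff_true, star_one,
          one_mul]
        rw [hLss, hLtt, hLst, hLts]
        have hww : star w * w = 1 := by rw [show star w * w = w * star w by ring, hwC]
        linear_combination (-1 : ℂ) * hAst + ((G.degree t : ℂ) - 1) * hww
      · intro i _ hi
        simp only [hx, if_neg hi.1, if_neg hi.2, star_zero, zero_mul]
    rw [this]
    push_cast
    simp
  have := rayleigh_lower_bound L hL (hL.eigenvalues k) hc x
  rw [hxx, hform] at this
  linarith
end

section
/- Let Φ = (G, φ) be a connected nonempty complex unit gain graph. Then λ₁(Φ) ≤ min over edges v_s ∼ v_t of (1/2)( d_s + d_t − √((d_s − d_t)² + 4) ). -/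
open Matrix BigOperators

lemma rayleigh_min_aux {n : ℕ} (M : Matrix (Fin n) (Fin n) ℂ) (hM : M.IsHermitian)
    (x : Fin n → ℂ) (hx : x ≠ 0) :
    ∃ k, hM.eigenvalues k * (star x ⬝ᵥ x).re ≤ (star x ⬝ᵥ M *ᵥ x).re := by
  obtain ⟨i0, hi0⟩ : ∃ i, x i ≠ 0 := Function.ne_iff.mp hx
  set U : Matrix (Fin n) (Fin n) ℂ := (hM.eigenvectorUnitary : Matrix (Fin n) (Fin n) ℂ) with hU
  set y : Fin n → ℂ := star U *ᵥ x with hy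
  have hUU : U * star U = 1 := (Matrix.mem_unitaryGroup_iff).mp hM.eigenvectorUnitary.2
  have hstary : star x ᵥ* U = star y := by
    rw [hy, star_mulVec, Matrix.star_eq_conjTranspose, Matrix.conjTranspose_conjTranspose]
  have key1 : star x ⬝ᵥ M *ᵥ x = ∑ j, (hM.eigenvalues j : ℂ) * Complex.normSq (y j) := by
    conv_lhs => rw [hM.spectral_theorem, Unitary.conjStarAlgAut_apply]
    rw [← hU, ← Matrix.mulVec_mulVec, ← Matrix.mulVec_mulVec, Matrix.dotProduct_mulVec, hstary,
      ← hy]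
    simp only [dotProduct, Matrix.mulVec_diagonal, Function.comp, Pi.star_apply]
    refine Finset.sum_congr rfl fun j _ => ?_
    rw [← mul_assoc, mul_comm (star (y j)), mul_assoc]
    congr 1
    rw [← Complex.mul_conj, mul_comm]
    rfl
  have key2 : (star x ⬝ᵥ x).re = ∑ i, Complex.normSq (y i) := by
    have h1 : star y ⬝ᵥ y = star x ⬝ᵥ x := by
      rw [← hstary, hy, ← Matrix.dotProduct_mulVec, Matrix.mulVec_mulVec, hUU, Matrix.one_mulVec]
    have := congrArg Complex.re h1
    rw [← this]
    simp [dotProduct, Complex.mul_conj', Complex.normSq_apply]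
  obtain ⟨k, -, hk⟩ := Finset.exists_min_image Finset.univ hM.eigenvalues ⟨i0, Finset.mem_univ i0⟩
  refine ⟨k, ?_⟩
  have hre : (star x ⬝ᵥ M *ᵥ x).re = ∑ j, hM.eigenvalues j * Complex.normSq (y j) := by
    rw [key1]
    simp [Complex.re_sum]
  rw [hre, key2, Finset.mul_sum]
  exact Finset.sum_le_sum fun j _ =>
    mul_le_mul_of_nonneg_right (hk j (Finset.mem_univ j)) (Complex.normSq_nonneg _)

lemma quad_real_aux (d1 d2 lam : ℝ)
    (h : lam * (1 + (d1 - (d1 + d2 - Real.sqrt ((d1 - d2) ^ 2 + 4)) / 2) ^ 2) ≤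
      d1 - 2 * (d1 - (d1 + d2 - Real.sqrt ((d1 - d2) ^ 2 + 4)) / 2) +
        d2 * (d1 - (d1 + d2 - Real.sqrt ((d1 - d2) ^ 2 + 4)) / 2) ^ 2) :
    lam ≤ (d1 + d2 - Real.sqrt ((d1 - d2) ^ 2 + 4)) / 2 := by
  have hR2 : (Real.sqrt ((d1 - d2) ^ 2 + 4)) ^ 2 = (d1 - d2) ^ 2 + 4 :=
    Real.sq_sqrt (by positivity)
  generalize hR : Real.sqrt ((d1 - d2) ^ 2 + 4) = R at h hR2 ⊢
  have heq : d1 - 2 * (d1 - (d1 + d2 - R) / 2) + d2 * (d1 - (d1 + d2 - R) / 2) ^ 2 =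
      ((d1 + d2 - R) / 2) * (1 + (d1 - (d1 + d2 - R) / 2) ^ 2) := by
    linear_combination ((d1 - (d1 + d2 - R) / 2) / 4) * hR2
  rw [heq] at h
  have hpos : (0:ℝ) < 1 + (d1 - (d1 + d2 - R) / 2) ^ 2 := by positivity
  exact le_of_mul_le_mul_right h hpos

/-- For a connected nonempty gain graph,
`λ₁(Φ) ≤ (d_s + d_t − √((d_s − d_t)² + 4))/2` for every edge `v_s ∼ v_t`. -/
theorem least_eigenvalue_degree_sqrt_bound {n : ℕ}
    (G : SimpleGraph (Fin n)) [DecidableRel G.Adj]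
    (A : Matrix (Fin n) (Fin n) ℂ)
    (hsym : ∀ i j, A j i = star (A i j))
    (hunit : ∀ i j, G.Adj i j → ‖A i j‖ = 1)
    (hzero : ∀ i j, ¬ G.Adj i j → A i j = 0)
    (L : Matrix (Fin n) (Fin n) ℂ)
    (hLdef : L = Matrix.diagonal (fun i => (G.degree i : ℂ)) - A)
    (hL : L.IsHermitian)
    (hconn : G.Connected) :
    ∀ s t, G.Adj s t →
      ∃ k, hL.eigenvalues k ≤
        ((G.degree s : ℝ) + G.degree t -
          Real.sqrt (((G.degree s : ℝ) - G.degree t) ^ 2 + 4)) / 2 := by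
  intro s t hst
  have hne : s ≠ t := G.ne_of_adj hst
  set d1 : ℝ := (G.degree s : ℝ) with hd1
  set d2 : ℝ := (G.degree t : ℝ) with hd2
  set μ : ℝ := (d1 + d2 - Real.sqrt ((d1 - d2) ^ 2 + 4)) / 2 with hμ
  set β : ℝ := d1 - μ with hβ
  set u : ℂ := A s t with hu
  have hu1 : (starRingEnd ℂ) u * u = 1 := by
    rw [mul_comm, Complex.mul_conj]
    norm_cast
    rw [← Complex.sq_norm, hunit s t hst]
    norm_num
  set x : Fin n → ℂ := Pi.single s u + Pi.single t (β : ℂ) with hx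
  have hxs : x s = u := by
    simp [hx, Pi.single_apply, hne, hne.symm]
  have hxne : x ≠ 0 := by
    intro h
    have : u = 0 := by rw [← hxs, h]; rfl
    rw [this] at hu1; simp at hu1
  have hstarx : star x = Pi.single s (star u) + Pi.single t ((β : ℂ)) := by
    funext i
    rcases eq_or_ne i s with rfl | his
    · simp [hx, Pi.single_apply, hne, hne.symm]
    rcases eq_or_ne i t with rfl | hit
    · simp [hx, Pi.single_apply, hne, hne.symm]
    · simp [hx, Pi.single_apply, his, hit]
  have hLss : L s s = (G.degree s : ℂ) := by
    rw [hLdef]; simp [hzero s s (G.irrefl)]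
  have hLtt : L t t = (G.degree t : ℂ) := by
    rw [hLdef]; simp [hzero t t (G.irrefl)]
  have hLst : L s t = -u := by
    rw [hLdef]; simp [Matrix.diagonal_apply_ne _ hne, hu]
  have hLts : L t s = -star u := by
    rw [hLdef]; simp [Matrix.diagonal_apply_ne _ hne.symm, hsym s t, hu]
  have hquad : (star x ⬝ᵥ L *ᵥ x).re = d1 - 2 * β + d2 * β ^ 2 := by
    rw [hstarx]
    rw [show L *ᵥ x = L *ᵥ Pi.single s u + L *ᵥ Pi.single t (β:ℂ) by
      rw [hx, Matrix.mulVec_add]]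
    simp only [add_dotProduct, dotProduct_add, Matrix.mulVec_single,
      single_dotProduct, Pi.smul_apply, Matrix.col_apply, MulOpposite.smul_eq_mul_unop,
      MulOpposite.unop_op]
    rw [hLss, hLtt, hLst, hLts]
    have h2 : star u * ((G.degree s : ℂ) * u) + (β:ℂ) * (-star u * u) +
        (star u * (-u * (β:ℂ)) + (β:ℂ) * ((G.degree t : ℂ) * (β:ℂ))) =
        ((d1 - 2 * β + d2 * β ^ 2 : ℝ) : ℂ) := by
      simp only [Complex.star_def]
      rw [hd1, hd2]
      push_cast
      linear_combination ((G.degree s : ℂ) - 2 * (β:ℂ)) * hu1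
    rw [h2, Complex.ofReal_re]
  have hnorm : (star x ⬝ᵥ x).re = 1 + β ^ 2 := by
    rw [hstarx]
    simp only [add_dotProduct, single_dotProduct]
    have hxt : x t = (β:ℂ) := by simp [hx, Pi.single_apply, hne, hne.symm]
    have h3 : star u * x s + (β:ℂ) * x t = ((1 + β ^ 2 : ℝ) : ℂ) := by
      rw [hxs, hxt]
      simp only [Complex.star_def]
      push_cast
      linear_combination hu1
    rw [h3, Complex.ofReal_re]
  obtain ⟨k, hk⟩ := rayleigh_min_aux L hL x hxne
  rw [hquad, hnorm] at hk
  exact ⟨k, quad_real_aux d1 d2 _ hk⟩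
end

section
/- Let Φ = (G, φ) be a connected nonempty complex unit gain graph on n vertices with minimum degree δ > 0. Then λ₁(Φ) ≤ (1/2)( δ + n − 1 − √((n − 1 − δ)² + 4) ) < δ. -/
open Matrix BigOperators

lemma sum_pair_of_eq_zero {α M : Type*} [Fintype α] [DecidableEq α] [AddCommMonoid M]
    {v u : α} (hvu : v ≠ u) (f : α → M) (hf : ∀ i, i ≠ v → i ≠ u → f i = 0) :
    ∑ i, f i = f v + f u := by
  rw [← Finset.sum_pair hvu]
  refine (Finset.sum_subset (Finset.subset_univ _) fun i _ hi => ?_).symm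
  simp only [Finset.mem_insert, Finset.mem_singleton, not_or] at hi
  exact hf i hi.1 hi.2

lemma exists_eigenvalue_mul_le {n : ℕ} {L : Matrix (Fin n) (Fin n) ℂ} (hL : L.IsHermitian)
    (x : Fin n → ℂ) (hx : x ≠ 0) :
    ∃ k, hL.eigenvalues k * (∑ i, Complex.normSq (x i)) ≤ (star x ⬝ᵥ (L *ᵥ x)).re := by
  have hne : Nonempty (Fin n) := by
    obtain ⟨i, -⟩ := Function.ne_iff.mp hx
    exact ⟨i⟩
  obtain ⟨k, hk⟩ := Finite.exists_min hL.eigenvalues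
  refine ⟨k, ?_⟩
  set U : Matrix (Fin n) (Fin n) ℂ := (hL.eigenvectorUnitary : Matrix (Fin n) (Fin n) ℂ) with hU
  set y : Fin n → ℂ := star U *ᵥ x with hy
  have hstary : star y = star x ᵥ* U := by
    rw [hy, star_mulVec, star_eq_conjTranspose, conjTranspose_conjTranspose]
  have h1 : star x ⬝ᵥ (L *ᵥ x) = ∑ j, (hL.eigenvalues j : ℂ) * (Complex.normSq (y j) : ℂ) := by
    conv_lhs => rw [hL.spectral_theorem, Unitary.conjStarAlgAut_apply]
    rw [← mulVec_mulVec, ← mulVec_mulVec, dotProduct_mulVec, ← hstary, ← hy]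
    unfold dotProduct
    refine Finset.sum_congr rfl fun j _ => ?_
    rw [Matrix.mulVec_diagonal, Complex.normSq_eq_conj_mul_self]
    simp only [Function.comp_apply, Pi.star_apply, RingHom.coe_coe, Complex.star_def]
    exact mul_left_comm ((starRingEnd ℂ) (y j)) ((hL.eigenvalues j : ℂ)) (y j)
  have h2 : ∑ j, Complex.normSq (y j) = ∑ i, Complex.normSq (x i) := by
    have h0 : star y ⬝ᵥ y = star x ⬝ᵥ x := by
      rw [hstary, hy, ← dotProduct_mulVec, mulVec_mulVec,
        (Matrix.mem_unitaryGroup_iff).mp hL.eigenvectorUnitary.2, one_mulVec]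
    have h3 : ((∑ j, Complex.normSq (y j) : ℝ) : ℂ) = ((∑ i, Complex.normSq (x i) : ℝ) : ℂ) := by
      push_cast
      simpa [dotProduct, Complex.normSq_eq_conj_mul_self] using h0
    exact_mod_cast h3
  have h4 : (star x ⬝ᵥ (L *ᵥ x)).re = ∑ j, hL.eigenvalues j * Complex.normSq (y j) := by
    rw [h1, Complex.re_sum]
    simp
  rw [h4, ← h2, Finset.mul_sum]
  exact Finset.sum_le_sum fun j _ => mul_le_mul_of_nonneg_right (hk j) (Complex.normSq_nonneg _)

set_option maxHeartbeats 1000000 in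
/-- For a connected nonempty gain graph with minimum degree `δ > 0`,
`λ₁(Φ) ≤ (δ + n − 1 − √((n − 1 − δ)² + 4))/2 < δ`. -/
theorem least_eigenvalue_min_degree_bound {n δ : ℕ}
    (G : SimpleGraph (Fin n)) [DecidableRel G.Adj]
    (A : Matrix (Fin n) (Fin n) ℂ)
    (hsym : ∀ i j, A j i = star (A i j))
    (hunit : ∀ i j, G.Adj i j → ‖A i j‖ = 1)
    (hzero : ∀ i j, ¬ G.Adj i j → A i j = 0)
    (L : Matrix (Fin n) (Fin n) ℂ)
    (hLdef : L = Matrix.diagonal (fun i => (G.degree i : ℂ)) - A)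
    (hL : L.IsHermitian)
    (hconn : G.Connected)
    (hδmin : ∀ v, δ ≤ G.degree v) (hδattain : ∃ v, G.degree v = δ)
    (hδpos : 0 < δ) :
    (∃ k, hL.eigenvalues k ≤
        ((δ : ℝ) + n - 1 - Real.sqrt (((n : ℝ) - 1 - δ) ^ 2 + 4)) / 2) ∧
      ((δ : ℝ) + n - 1 - Real.sqrt (((n : ℝ) - 1 - δ) ^ 2 + 4)) / 2 < δ := by
  set m : ℝ := (n : ℝ) - 1 with hm
  set s : ℝ := Real.sqrt (((n : ℝ) - 1 - δ) ^ 2 + 4) with hs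
  have hs0 : 0 ≤ s := Real.sqrt_nonneg _
  have hs2 : s ^ 2 = (m - δ) ^ 2 + 4 := Real.sq_sqrt (by positivity)
  set T : ℝ := ((δ : ℝ) + n - 1 - s) / 2 with hT
  have hslt1 : m - (δ:ℝ) < s := by nlinarith
  have hslt2 : (δ : ℝ) - m < s := by nlinarith
  have hprod : ((δ : ℝ) - T) * (m - T) = 1 := by
    rw [hT, hm]; nlinarith [hs2]
  have hc0 : 0 < (δ : ℝ) - T := by rw [hT]; rw [hm] at hslt1; linarith
  have hTδ : T < (δ : ℝ) := by linarith
  refine ⟨?_, hTδ⟩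
  obtain ⟨v, hv⟩ := hδattain
  have hdv : 0 < G.degree v := hv ▸ hδpos
  obtain ⟨u, hu⟩ := (G.degree_pos_iff_exists_adj v).mp hdv
  have hvu : v ≠ u := G.ne_of_adj hu
  set c : ℝ := (δ : ℝ) - T with hcdef
  set β : ℂ := (c : ℂ) * star (A v u) with hβ
  clear_value β
  set x : Fin n → ℂ := fun i => if i = v then 1 else if i = u then β else 0 with hx
  clear_value x
  have hxv : x v = 1 := by simp [hx]
  have hxu : x u = β := by simp [hx, hvu.symm]
  have hxo : ∀ i, i ≠ v → i ≠ u → x i = 0 := by intro i h1 h2; simp [hx, h1, h2]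
  have hxne : x ≠ 0 := by
    intro h
    have := congrFun h v
    rw [hxv] at this
    simp at this
  -- unit gain fact
  have habs : Complex.normSq (A v u) = 1 := by
    rw [← Complex.sq_norm, hunit v u hu]; norm_num
  have hnsq : A v u * (starRingEnd ℂ) (A v u) = 1 := by
    rw [mul_comm, ← Complex.normSq_eq_conj_mul_self, habs]; norm_num
  -- matrix entries
  have hAvv : A v v = 0 := hzero v v (G.irrefl)
  have hAuu : A u u = 0 := hzero u u (G.irrefl)
  have hLvv : L v v = (δ : ℂ) := by
    rw [hLdef]; simp [Matrix.sub_apply, Matrix.diagonal_apply_eq, hAvv, hv]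
  have hLuu : L u u = (G.degree u : ℂ) := by
    rw [hLdef]; simp [Matrix.sub_apply, Matrix.diagonal_apply_eq, hAuu]
  have hLvu : L v u = -A v u := by
    rw [hLdef]; simp [Matrix.sub_apply, Matrix.diagonal_apply_ne _ hvu]
  have hLuv : L u v = -star (A v u) := by
    rw [hLdef]; simp [Matrix.sub_apply, Matrix.diagonal_apply_ne _ hvu.symm, hsym v u]
  -- the vector sums
  have hmv : ∀ i, (L *ᵥ x) i = L i v + L i u * β := by
    intro i
    show (fun j => L i j) ⬝ᵥ x = _
    unfold dotProduct
    rw [sum_pair_of_eq_zero hvu (fun j => L i j * x j)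
      (fun j h1 h2 => by simp [hxo j h1 h2]), hxv, hxu, mul_one]
  have hsum : ∑ i, Complex.normSq (x i) = 1 + c ^ 2 := by
    rw [sum_pair_of_eq_zero hvu (fun i => Complex.normSq (x i))
      (fun i h1 h2 => by simp [hxo i h1 h2]), hxv, hxu, hβ]
    simp [Complex.normSq_mul, habs]
    ring
  have hdot : star x ⬝ᵥ (L *ᵥ x)
      = (((δ : ℝ) - 2 * c + (G.degree u : ℝ) * c ^ 2 : ℝ) : ℂ) := by
    unfold dotProduct
    rw [sum_pair_of_eq_zero hvu (fun i => star x i * (L *ᵥ x) i)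
      (fun i h1 h2 => by simp [hxo i h1 h2])]
    simp only [Pi.star_apply, hxv, hxu, hmv, hLvv, hLuu, hLvu, hLuv, hβ, Complex.star_def,
      _root_.map_mul, Complex.conj_ofReal, Complex.conj_conj, _root_.map_one]
    push_cast
    linear_combination (-2*(c:ℂ) + (G.degree u : ℂ)*(c:ℂ)^2) * hnsq
  obtain ⟨k, hk⟩ := exists_eigenvalue_mul_le hL x hxne
  refine ⟨k, ?_⟩
  rw [hsum, hdot, Complex.ofReal_re] at hk
  have hdu : (G.degree u : ℝ) ≤ m := by
    have h5 : G.degree u < n := by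
      simpa using G.degree_lt_card_verts u
    rw [hm]
    have : ((G.degree u : ℝ)) + 1 ≤ (n : ℝ) := by exact_mod_cast h5
    linarith
  have hkey : (δ : ℝ) - 2 * c + (G.degree u : ℝ) * c ^ 2 ≤ T * (1 + c ^ 2) := by
    have h6 : (δ : ℝ) - 2 * c + m * c ^ 2 = T * (1 + c ^ 2) := by
      have hc' : c = (δ : ℝ) - T := hcdef
      nlinarith [hprod]
    nlinarith [sq_nonneg c]
  have h7 : hL.eigenvalues k * (1 + c ^ 2) ≤ T * (1 + c ^ 2) := le_trans hk hkey
  have h8 : (0:ℝ) < 1 + c ^ 2 := by positivity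
  exact le_of_mul_le_mul_right (by linarith [h7]) h8
end

section
/- Let Φ = (G, φ) be a connected complex unit gain graph containing a triangle on vertices v_s, v_t, v_r with cos θ_{str} = Re(φ(T_{s,t,r})), the real part of the gain of the triangle. Then λ₁(Φ) ≤ (d_s + d_t + d_r − 2 cos θ_{str} − 4)/3, and hence λ₁(Φ) ≤ min over triangles of this quantity. -/
open Matrix BigOperators
open scoped ComplexOrder

private lemma sum3 {n : ℕ} {s t r : Fin n} (hst : s ≠ t) (hsr : s ≠ r) (htr : t ≠ r)
    (a b c : ℂ) (g : Fin n → ℂ) :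
    ∑ i, (if i = s then a else if i = t then b else if i = r then c else 0) * g i
      = a * g s + b * g t + c * g r := by
  classical
  rw [← Finset.sum_subset (Finset.subset_univ ({s, t, r} : Finset (Fin n)))
    (by
      intro i _ hi
      simp only [Finset.mem_insert, Finset.mem_singleton, not_or] at hi
      simp [hi.1, hi.2.1, hi.2.2])]
  rw [Finset.sum_insert (by simp [hst, hsr]), Finset.sum_insert (by simp [htr]),
    Finset.sum_singleton]
  simp [hst.symm, hsr.symm, htr.symm]
  ring

private lemma herm_im_zero {n : ℕ} (L : Matrix (Fin n) (Fin n) ℂ)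
    (hL : L.IsHermitian) (x : Fin n → ℂ) : (star x ⬝ᵥ L *ᵥ x).im = 0 := by
  have h : star (star x ⬝ᵥ L *ᵥ x) = star x ⬝ᵥ L *ᵥ x := by
    conv_lhs => rw [Matrix.star_dotProduct, star_star, Matrix.star_mulVec, hL.eq,
      ← Matrix.dotProduct_mulVec]
  exact Complex.conj_eq_iff_im.mp h

private lemma exists_le_rayleigh {n : ℕ} (L : Matrix (Fin n) (Fin n) ℂ)
    (hL : L.IsHermitian) [Nonempty (Fin n)] (x : Fin n → ℂ) :
    ∃ k, (hL.eigenvalues k) * (star x ⬝ᵥ x).re ≤ (star x ⬝ᵥ L *ᵥ x).re := by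
  classical
  obtain ⟨k, hk⟩ := Finite.exists_min hL.eigenvalues
  refine ⟨k, ?_⟩
  set c : ℝ := hL.eigenvalues k with hc
  have hM : Matrix.PosSemidef (L - (c : ℂ) • (1 : Matrix (Fin n) (Fin n) ℂ)) := by
    have hU : (hL.eigenvectorUnitary : Matrix (Fin n) (Fin n) ℂ) *
        star (hL.eigenvectorUnitary : Matrix (Fin n) (Fin n) ℂ) = 1 :=
      Matrix.mem_unitaryGroup_iff.mp hL.eigenvectorUnitary.2
    have hd : Matrix.diagonal (fun i => ((hL.eigenvalues i - c : ℝ) : ℂ))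
        = Matrix.diagonal (RCLike.ofReal ∘ hL.eigenvalues) -
          (c : ℂ) • (1 : Matrix (Fin n) (Fin n) ℂ) := by
      ext i j
      by_cases h : i = j
      · subst h
        simp only [Matrix.diagonal_apply_eq, Matrix.sub_apply, Matrix.smul_apply,
          Matrix.one_apply_eq, Function.comp_apply, smul_eq_mul, mul_one]
        push_cast
        rfl
      · simp [Matrix.diagonal_apply_ne _ h, Matrix.one_apply_ne h]
    have key : L - (c : ℂ) • (1 : Matrix (Fin n) (Fin n) ℂ)
        = (hL.eigenvectorUnitary : Matrix (Fin n) (Fin n) ℂ) *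
          Matrix.diagonal (fun i => ((hL.eigenvalues i - c : ℝ) : ℂ)) *
          (hL.eigenvectorUnitary : Matrix (Fin n) (Fin n) ℂ)ᴴ := by
      conv_lhs => rw [hL.spectral_theorem, ← hU]
      rw [hd]
      simp only [Matrix.mul_sub, Matrix.sub_mul, Matrix.mul_smul, Matrix.smul_mul,
        Matrix.mul_one, Matrix.star_eq_conjTranspose, Unitary.conjStarAlgAut_apply]
    rw [key]
    refine Matrix.PosSemidef.mul_mul_conjTranspose_same ?_ _
    refine Matrix.posSemidef_diagonal_iff.mpr fun i => ?_
    rw [show (0 : ℂ) = ((0 : ℝ) : ℂ) by simp]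
    exact_mod_cast sub_nonneg.mpr (hk i)
  have h0 := hM.re_dotProduct_nonneg x
  have hexp : star x ⬝ᵥ (L - (c : ℂ) • (1 : Matrix (Fin n) (Fin n) ℂ)) *ᵥ x
      = star x ⬝ᵥ L *ᵥ x - (c : ℂ) * (star x ⬝ᵥ x) := by
    rw [Matrix.sub_mulVec, dotProduct_sub, Matrix.smul_mulVec,
      Matrix.one_mulVec, dotProduct_smul, smul_eq_mul]
  rw [hexp] at h0
  simp only [RCLike.re_to_complex, Complex.sub_re, Complex.mul_re, Complex.ofReal_re,
    Complex.ofReal_im, zero_mul, sub_zero] at h0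
  linarith

/-- Triangle bound for `λ₁(Φ)`: for every triangle on `v_s, v_t, v_r` with
`cos θ_{str} = Re(φ_{st}φ_{tr}φ_{rs})`, we have
`λ₁(Φ) ≤ (d_s + d_t + d_r − 2cos θ_{str} − 4)/3`. -/
theorem least_eigenvalue_triangle_bound {n : ℕ}
    (G : SimpleGraph (Fin n)) [DecidableRel G.Adj]
    (A : Matrix (Fin n) (Fin n) ℂ)
    (hsym : ∀ i j, A j i = star (A i j))
    (hunit : ∀ i j, G.Adj i j → ‖A i j‖ = 1)
    (hzero : ∀ i j, ¬ G.Adj i j → A i j = 0)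
    (L : Matrix (Fin n) (Fin n) ℂ)
    (hLdef : L = Matrix.diagonal (fun i => (G.degree i : ℂ)) - A)
    (hL : L.IsHermitian)
    (hconn : G.Connected) :
    ∀ s t r, G.Adj s t → G.Adj t r → G.Adj r s →
      ∃ k, hL.eigenvalues k ≤
        ((G.degree s : ℝ) + G.degree t + G.degree r -
          2 * (A s t * A t r * A r s).re - 4) / 3 := by
  intro s t r hst htr hrs
  have : Nonempty (Fin n) := ⟨s⟩
  have hst' : s ≠ t := G.ne_of_adj hst
  have htr' : t ≠ r := G.ne_of_adj htr
  have hsr' : s ≠ r := (G.ne_of_adj hrs).symm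
  have u1 : A s t * star (A s t) = 1 := by
    rw [Complex.star_def, Complex.mul_conj, ← Complex.sq_norm, hunit s t hst]; norm_num
  have u2 : A t r * star (A t r) = 1 := by
    rw [Complex.star_def, Complex.mul_conj, ← Complex.sq_norm, hunit t r htr]; norm_num
  have u3 : A r s * star (A r s) = 1 := by
    rw [Complex.star_def, Complex.mul_conj, ← Complex.sq_norm, hunit r s hrs]; norm_num
  set x : Fin n → ℂ := fun i =>
    if i = s then 1 else if i = t then star (A s t)
      else if i = r then star (A s t) * star (A t r) else 0 with hx
  have hstarx : star x = fun i =>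
      if i = s then 1 else if i = t then A s t
        else if i = r then A s t * A t r else 0 := by
    funext i
    simp only [Pi.star_apply, hx]
    split_ifs <;> simp
  have hxs : x s = 1 := by simp [hx]
  have hxt : x t = star (A s t) := by simp [hx, hst'.symm]
  have hxr : x r = star (A s t) * star (A t r) := by simp [hx, hsr'.symm, htr'.symm]
  -- norm
  have hnorm : star x ⬝ᵥ x = 3 := by
    rw [dotProduct, hstarx, sum3 hst' hsr' htr', hxs, hxt, hxr]
    linear_combination (1 + A t r * star (A t r)) * u1 + u2
  -- quadratic form of A
  have hAx : ∀ i, (A *ᵥ x) i = A i s + star (A s t) * A i t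
      + star (A s t) * star (A t r) * A i r := by
    intro i
    rw [Matrix.mulVec, dotProduct]
    have h' : ∀ j, A i j * x j = (if j = s then (1:ℂ) else if j = t then star (A s t)
        else if j = r then star (A s t) * star (A t r) else 0) * A i j := by
      intro j; rw [hx, mul_comm]
    simp_rw [h']
    rw [sum3 hst' hsr' htr']
    ring
  have hself : ∀ i, A i i = 0 := fun i => hzero i i (G.irrefl)
  have hQA : star x ⬝ᵥ A *ᵥ x
      = 4 + (A s t * A t r * A r s + star (A s t * A t r * A r s)) := by
    rw [dotProduct, hstarx, sum3 hst' hsr' htr',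
      hAx s, hAx t, hAx r, hself s, hself t, hself r,
      hsym s t, hsym t r, hsym r s, star_mul', star_mul']
    linear_combination (2 + 2 * (A t r * star (A t r))) * u1 + 2 * u2
  -- quadratic form of the degree diagonal
  have hQD : star x ⬝ᵥ (Matrix.diagonal (fun i => (G.degree i : ℂ)) *ᵥ x)
      = (G.degree s : ℂ) + G.degree t + G.degree r := by
    have h' : (Matrix.diagonal (fun i => (G.degree i : ℂ)) *ᵥ x)
        = fun i => (G.degree i : ℂ) * x i := by
      funext i; rw [Matrix.mulVec_diagonal]
    rw [h', dotProduct, hstarx, sum3 hst' hsr' htr', hxs, hxt, hxr]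
    linear_combination ((G.degree t : ℂ) + (G.degree r : ℂ) * (A t r * star (A t r))) * u1
      + (G.degree r : ℂ) * u2
  have hQL : star x ⬝ᵥ L *ᵥ x = ((G.degree s : ℂ) + G.degree t + G.degree r)
      - (4 + (A s t * A t r * A r s + star (A s t * A t r * A r s))) := by
    rw [hLdef, Matrix.sub_mulVec, dotProduct_sub, hQD, hQA]
  obtain ⟨k, hk⟩ := exists_le_rayleigh L hL x
  refine ⟨k, ?_⟩
  rw [hnorm, hQL] at hk
  simp only [Complex.add_re, Complex.sub_re, Complex.natCast_re, Complex.star_def,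
    Complex.conj_re, show ((3:ℂ)).re = 3 from by norm_num,
    show ((4:ℂ)).re = 4 from by norm_num] at hk
  linarith
end

section
/- Let Φ be a complex unit gain graph with gain Laplacian L(Φ). For every positive integer k, the largest eigenvalue satisfies λ_n(Φ) ≥ ( max_i (L^k(Φ))_{ii} )^{1/k}, and moreover λ_n(Φ) = lim_{k→∞} ( max_i (L^k(Φ))_{ii} )^{1/k}. -/
open Matrix BigOperators Filter Topology
open scoped ComplexOrder

lemma gainLap_posSemidef {n : ℕ}
    (G : SimpleGraph (Fin n)) [DecidableRel G.Adj]
    (A : Matrix (Fin n) (Fin n) ℂ)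
    (hsym : ∀ i j, A j i = star (A i j))
    (hunit : ∀ i j, G.Adj i j → ‖A i j‖ = 1)
    (hzero : ∀ i j, ¬ G.Adj i j → A i j = 0) :
    (Matrix.diagonal (fun i => (G.degree i : ℂ)) - A).PosSemidef := by
  have hA : A.IsHermitian := by
    ext i j
    rw [Matrix.conjTranspose_apply, ← hsym]
  have hD : (Matrix.diagonal (fun i => (G.degree i : ℂ))).IsHermitian := by
    rw [Matrix.isHermitian_diagonal_iff]
    intro i
    simp [_root_.IsSelfAdjoint, Complex.star_def, Complex.conj_natCast]
  refine Matrix.PosSemidef.of_dotProduct_mulVec_nonneg (hD.sub hA) fun x => ?_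
  rw [sub_mulVec, dotProduct_sub, Complex.nonneg_iff]
  have hfilter : ∀ i : Fin n, Finset.univ.filter (G.Adj i) = G.neighborFinset i := by
    intro i; ext j; simp
  -- the diagonal part
  have hq1 : star x ⬝ᵥ (Matrix.diagonal (fun i => (G.degree i : ℂ)) *ᵥ x)
      = ∑ i, ((G.degree i : ℝ) * Complex.normSq (x i) : ℂ) := by
    simp only [dotProduct, mulVec_diagonal, Pi.star_apply]
    refine Finset.sum_congr rfl fun i _ => ?_
    push_cast
    rw [RCLike.star_def]
    rw [show (starRingEnd ℂ) (x i) * ((G.degree i : ℂ) * x i)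
        = (G.degree i : ℂ) * (x i * (starRingEnd ℂ) (x i)) by ring, Complex.mul_conj]
  -- the adjacency part
  have hq2 : star x ⬝ᵥ (A *ᵥ x) = ∑ i, ∑ j, star (x i) * (A i j * x j) := by
    simp only [dotProduct, mulVec, Pi.star_apply, Finset.mul_sum]
  constructor
  · -- real part nonneg
    rw [Complex.sub_re, hq1, hq2]
    have h1re : (∑ i, ((G.degree i : ℝ) * Complex.normSq (x i) : ℂ)).re
        = ∑ i, (G.degree i : ℝ) * Complex.normSq (x i) := by
      rw [Complex.re_sum]
      exact Finset.sum_congr rfl fun i _ => by simp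
    rw [h1re, sub_nonneg]
    have h2re : (∑ i, ∑ j, star (x i) * (A i j * x j)).re
        = ∑ i, ∑ j, (star (x i) * (A i j * x j)).re := by
      rw [Complex.re_sum]
      exact Finset.sum_congr rfl fun i _ => Complex.re_sum _ _
    rw [h2re]
    have hbound : ∀ i j, (star (x i) * (A i j * x j)).re
        ≤ if G.Adj i j then (Complex.normSq (x i) + Complex.normSq (x j)) / 2 else 0 := by
      intro i j
      by_cases h : G.Adj i j
      · simp only [h, if_true]
        calc (star (x i) * (A i j * x j)).re
            ≤ ‖star (x i) * (A i j * x j)‖ := Complex.re_le_norm _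
          _ = ‖x i‖ * ‖x j‖ := by
              rw [norm_mul, norm_mul, RCLike.star_def, Complex.norm_conj, hunit i j h, one_mul]
          _ ≤ (Complex.normSq (x i) + Complex.normSq (x j)) / 2 := by
              rw [← Complex.sq_norm, ← Complex.sq_norm]
              nlinarith [sq_nonneg (‖x i‖ - ‖x j‖),
                norm_nonneg (x i), norm_nonneg (x j)]
      · simp [h, hzero i j h]
    calc ∑ i, ∑ j, (star (x i) * (A i j * x j)).re
        ≤ ∑ i, ∑ j, (if G.Adj i j then (Complex.normSq (x i) + Complex.normSq (x j)) / 2 else 0) :=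
          Finset.sum_le_sum fun i _ => Finset.sum_le_sum fun j _ => hbound i j
      _ = ∑ i, ∑ j, ((if G.Adj i j then Complex.normSq (x i) / 2 else 0)
            + (if G.Adj i j then Complex.normSq (x j) / 2 else 0)) := by
          refine Finset.sum_congr rfl fun i _ => Finset.sum_congr rfl fun j _ => ?_
          by_cases h : G.Adj i j <;> simp [h] <;> ring
      _ = ∑ i, (G.degree i : ℝ) * Complex.normSq (x i) := by
          simp only [Finset.sum_add_distrib]
          have e1 : ∑ i, ∑ j, (if G.Adj i j then Complex.normSq (x i) / 2 else 0)
              = ∑ i, (G.degree i : ℝ) * Complex.normSq (x i) / 2 := by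
            refine Finset.sum_congr rfl fun i _ => ?_
            rw [← Finset.sum_filter, hfilter, Finset.sum_const, SimpleGraph.degree,
              nsmul_eq_mul]
            ring
          have e2 : ∑ i, ∑ j, (if G.Adj i j then Complex.normSq (x j) / 2 else 0)
              = ∑ i, (G.degree i : ℝ) * Complex.normSq (x i) / 2 := by
            rw [Finset.sum_comm]
            refine Finset.sum_congr rfl fun j _ => ?_
            have : (Finset.univ.filter (fun i => G.Adj i j)) = G.neighborFinset j := by
              ext i; simp [G.adj_comm]
            rw [← Finset.sum_filter, this, Finset.sum_const, SimpleGraph.degree, nsmul_eq_mul]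
            ring
          rw [e1, e2, ← Finset.sum_add_distrib]
          exact Finset.sum_congr rfl fun i _ => by ring
  · -- imaginary part zero
    rw [Complex.sub_im, hq1, hq2]
    have h1im : (∑ i, ((G.degree i : ℝ) * Complex.normSq (x i) : ℂ)).im = 0 := by
      rw [Complex.im_sum]
      exact Finset.sum_eq_zero fun i _ => by simp
    have h2im : (∑ i, ∑ j, star (x i) * (A i j * x j)).im = 0 := by
      have hconj : (starRingEnd ℂ) (∑ i, ∑ j, star (x i) * (A i j * x j))
          = ∑ i, ∑ j, star (x i) * (A i j * x j) := by
        rw [map_sum]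
        rw [Finset.sum_comm]
        refine Finset.sum_congr rfl fun i _ => ?_
        rw [map_sum]
        refine Finset.sum_congr rfl fun j _ => ?_
        simp only [_root_.map_mul, Complex.conj_conj, RCLike.star_def, hsym i j]
        ring
      have := Complex.conj_eq_iff_im.mp hconj
      linarith [this]
    rw [h1im, h2im]
    norm_num

/-- The largest gain Laplacian eigenvalue dominates `(max_i (L^k)_{ii})^{1/k}` for every
`k ≥ 1`, and this sequence of bounds converges to `λ_n(Φ)`. -/
theorem largest_eigenvalue_diag_power_bound {n : ℕ}
    (G : SimpleGraph (Fin n)) [DecidableRel G.Adj]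
    (A : Matrix (Fin n) (Fin n) ℂ)
    (hsym : ∀ i j, A j i = star (A i j))
    (hunit : ∀ i j, G.Adj i j → ‖A i j‖ = 1)
    (hzero : ∀ i j, ¬ G.Adj i j → A i j = 0)
    (L : Matrix (Fin n) (Fin n) ℂ)
    (hLdef : L = Matrix.diagonal (fun i => (G.degree i : ℂ)) - A)
    (hL : L.IsHermitian) :
    (∀ k : ℕ, 1 ≤ k →
      (⨆ i, ((L ^ k) i i).re) ^ ((1 : ℝ) / k) ≤ ⨆ j, hL.eigenvalues j) ∧
    Tendsto (fun k : ℕ => (⨆ i, ((L ^ k) i i).re) ^ ((1 : ℝ) / k)) atTop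
      (𝓝 (⨆ j, hL.eigenvalues j)) := by
  have hPSD : L.PosSemidef := by
    rw [hLdef]; exact gainLap_posSemidef G A hsym hunit hzero
  set μ : Fin n → ℝ := hL.eigenvalues with hμdef
  have hμ : ∀ j, 0 ≤ μ j := fun j => hPSD.eigenvalues_nonneg j
  set U : Matrix (Fin n) (Fin n) ℂ := (hL.eigenvectorUnitary : Matrix (Fin n) (Fin n) ℂ) with hUdef
  have hUU : U * star U = 1 := Matrix.mem_unitaryGroup_iff.mp hL.eigenvectorUnitary.2
  have hUU' : star U * U = 1 := Matrix.mem_unitaryGroup_iff'.mp hL.eigenvectorUnitary.2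
  have hspec : L = U * Matrix.diagonal (fun j => ((μ j : ℝ) : ℂ)) * star U := by
    conv_lhs => rw [hL.spectral_theorem]
    rfl
  have key : ∀ d e : Fin n → ℂ, (U * Matrix.diagonal d * star U) * (U * Matrix.diagonal e * star U)
      = U * Matrix.diagonal (fun j => d j * e j) * star U := by
    intro d e
    rw [show (U * Matrix.diagonal d * star U) * (U * Matrix.diagonal e * star U)
        = U * Matrix.diagonal d * (star U * U) * (Matrix.diagonal e * star U) by
      simp only [Matrix.mul_assoc], hUU', Matrix.mul_one]
    rw [show U * Matrix.diagonal d * (Matrix.diagonal e * star U)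
        = U * (Matrix.diagonal d * Matrix.diagonal e) * star U by simp only [Matrix.mul_assoc],
      Matrix.diagonal_mul_diagonal]
  have hLk : ∀ k : ℕ, L ^ k = U * Matrix.diagonal (fun j => (μ j : ℂ) ^ k) * star U := by
    intro k
    induction k with
    | zero =>
      simp only [pow_zero]
      rw [show Matrix.diagonal (fun _ : Fin n => (1 : ℂ)) = 1 from Matrix.diagonal_one,
        Matrix.mul_one, hUU]
    | succ k ih =>
      rw [pow_succ, ih, hspec, key]
      rw [show (fun j => (μ j : ℂ) ^ k * (μ j : ℂ)) = fun j => (μ j : ℂ) ^ (k + 1) by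
        funext j; rw [← pow_succ]]
  have hdiagEntry : ∀ (d : Fin n → ℂ) i, (U * Matrix.diagonal d * star U) i i
      = ∑ j, d j * (Complex.normSq (U i j) : ℂ) := by
    intro d i
    rw [Matrix.mul_apply]
    refine Finset.sum_congr rfl fun j _ => ?_
    rw [Matrix.mul_diagonal, Matrix.star_apply]
    rw [show U i j * d j * star (U i j) = d j * (U i j * star (U i j)) by ring]
    rw [RCLike.star_def, Complex.mul_conj]
  have hrow : ∀ i, ∑ j, Complex.normSq (U i j) = 1 := by
    intro i
    have h := congrFun (congrFun hUU i) i
    rw [Matrix.mul_apply, Matrix.one_apply_eq] at h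
    have h2 : (↑(∑ j, Complex.normSq (U i j)) : ℂ) = 1 := by
      push_cast
      rw [← h]
      refine Finset.sum_congr rfl fun j _ => ?_
      rw [Matrix.star_apply, RCLike.star_def, Complex.mul_conj]
    exact_mod_cast h2
  have hcol : ∀ j, ∑ i, Complex.normSq (U i j) = 1 := by
    intro j
    have h := congrFun (congrFun hUU' j) j
    rw [Matrix.mul_apply, Matrix.one_apply_eq] at h
    have h2 : (↑(∑ i, Complex.normSq (U i j)) : ℂ) = 1 := by
      push_cast
      rw [← h]
      refine Finset.sum_congr rfl fun i _ => ?_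
      rw [Matrix.star_apply, RCLike.star_def]
      rw [show (starRingEnd ℂ) (U i j) * U i j = U i j * (starRingEnd ℂ) (U i j) by ring,
        Complex.mul_conj]
    exact_mod_cast h2
  have hdre : ∀ (k : ℕ) i, ((L ^ k) i i).re = ∑ j, μ j ^ k * Complex.normSq (U i j) := by
    intro k i
    rw [hLk k, hdiagEntry, Complex.re_sum]
    refine Finset.sum_congr rfl fun j _ => ?_
    rw [show ((μ j : ℂ)) ^ k * (Complex.normSq (U i j) : ℂ)
        = ((μ j ^ k * Complex.normSq (U i j) : ℝ) : ℂ) by push_cast; ring]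
    exact Complex.ofReal_re _
  -- now the analysis
  rcases Nat.eq_zero_or_pos n with hn | hn
  · subst hn
    have hempty : ∀ f : Fin 0 → ℝ, (⨆ i, f i) = 0 := fun f => by
      rw [iSup, Set.range_eq_empty]; exact Real.sSup_empty
    constructor
    · intro k hk
      rw [hempty, hempty, Real.zero_rpow]
      positivity
    · rw [hempty]
      have hev : ∀ᶠ k : ℕ in atTop, (0 : ℝ) = (⨆ i, ((L ^ k) i i).re) ^ ((1 : ℝ) / k) := by
        filter_upwards [eventually_ge_atTop 1] with k hk
        rw [hempty, Real.zero_rpow]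
        positivity
      exact Tendsto.congr' hev tendsto_const_nhds
  · have : Nonempty (Fin n) := Fin.pos_iff_nonempty.mp hn
    obtain ⟨j₀, hj₀⟩ := Finite.exists_max μ
    have hbdd : BddAbove (Set.range μ) := (Set.finite_range μ).bddAbove
    have hM : (⨆ j, μ j) = μ j₀ := le_antisymm (ciSup_le hj₀) (le_ciSup hbdd j₀)
    set M : ℝ := μ j₀ with hMdef
    have hM0 : 0 ≤ M := hμ j₀
    have hdiag_nonneg : ∀ (k : ℕ) i, 0 ≤ ((L ^ k) i i).re := by
      intro k i
      rw [hdre]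
      exact Finset.sum_nonneg fun j _ =>
        mul_nonneg (pow_nonneg (hμ j) k) (Complex.normSq_nonneg _)
    have hdiag_le : ∀ (k : ℕ) i, ((L ^ k) i i).re ≤ M ^ k := by
      intro k i
      rw [hdre]
      calc ∑ j, μ j ^ k * Complex.normSq (U i j)
          ≤ ∑ j, M ^ k * Complex.normSq (U i j) :=
            Finset.sum_le_sum fun j _ => mul_le_mul_of_nonneg_right
              (pow_le_pow_left₀ (hμ j) (hj₀ j) k) (Complex.normSq_nonneg _)
        _ = M ^ k := by rw [← Finset.mul_sum, hrow, mul_one]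
    have hbddS : ∀ k : ℕ, BddAbove (Set.range fun i => ((L ^ k) i i).re) :=
      fun k => (Set.finite_range _).bddAbove
    have hS_le : ∀ k : ℕ, (⨆ i, ((L ^ k) i i).re) ≤ M ^ k :=
      fun k => ciSup_le fun i => hdiag_le k i
    have hS_nonneg : ∀ k : ℕ, 0 ≤ (⨆ i, ((L ^ k) i i).re) := fun k =>
      le_trans (hdiag_nonneg k (Classical.arbitrary _)) (le_ciSup (hbddS k) _)
    have htrace : ∀ k : ℕ, M ^ k ≤ ∑ i, ((L ^ k) i i).re := by
      intro k
      have e : ∑ i, ((L ^ k) i i).re = ∑ j, μ j ^ k := by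
        calc ∑ i, ((L ^ k) i i).re = ∑ i, ∑ j, μ j ^ k * Complex.normSq (U i j) :=
              Finset.sum_congr rfl fun i _ => hdre k i
          _ = ∑ j, ∑ i, μ j ^ k * Complex.normSq (U i j) := Finset.sum_comm
          _ = ∑ j, μ j ^ k := by
              refine Finset.sum_congr rfl fun j _ => ?_
              rw [← Finset.mul_sum, hcol, mul_one]
      rw [e]
      exact Finset.single_le_sum (fun j _ => pow_nonneg (hμ j) k) (Finset.mem_univ j₀)
    have hnpos : (0 : ℝ) < n := by exact_mod_cast hn
    have hS_ge : ∀ k : ℕ, M ^ k / n ≤ (⨆ i, ((L ^ k) i i).re) := by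
      intro k
      rw [div_le_iff₀ hnpos]
      calc M ^ k ≤ ∑ i, ((L ^ k) i i).re := htrace k
        _ ≤ ∑ _i : Fin n, (⨆ i, ((L ^ k) i i).re) :=
            Finset.sum_le_sum fun i _ => le_ciSup (hbddS k) i
        _ = (⨆ i, ((L ^ k) i i).re) * n := by
            rw [Finset.sum_const, Finset.card_univ, Fintype.card_fin, nsmul_eq_mul, mul_comm]
    have part1 : ∀ k : ℕ, 1 ≤ k →
        (⨆ i, ((L ^ k) i i).re) ^ ((1 : ℝ) / k) ≤ ⨆ j, μ j := by
      intro k hk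
      rw [hM]
      have hk0 : (k : ℝ) ≠ 0 := by positivity
      have h1 : (⨆ i, ((L ^ k) i i).re) ^ ((1 : ℝ) / k) ≤ (M ^ k) ^ ((1 : ℝ) / k) :=
        Real.rpow_le_rpow (hS_nonneg k) (hS_le k) (by positivity)
      have h2 : ((M ^ k : ℝ)) ^ ((1 : ℝ) / k) = M := by
        rw [← Real.rpow_natCast M k, ← Real.rpow_mul hM0, mul_one_div, div_self hk0,
          Real.rpow_one]
      rw [h2] at h1
      exact h1
    refine ⟨part1, ?_⟩
    rw [hM]
    have hub : ∀ᶠ k : ℕ in atTop, (⨆ i, ((L ^ k) i i).re) ^ ((1 : ℝ) / k) ≤ M := by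
      filter_upwards [eventually_ge_atTop 1] with k hk
      have := part1 k hk
      rwa [hM] at this
    have hlb : ∀ᶠ k : ℕ in atTop,
        M / (n : ℝ) ^ ((1 : ℝ) / k) ≤ (⨆ i, ((L ^ k) i i).re) ^ ((1 : ℝ) / k) := by
      filter_upwards [eventually_ge_atTop 1] with k hk
      have hk0 : (k : ℝ) ≠ 0 := by positivity
      have h1 : (M ^ k / n) ^ ((1 : ℝ) / k) ≤ (⨆ i, ((L ^ k) i i).re) ^ ((1 : ℝ) / k) :=
        Real.rpow_le_rpow (by positivity) (hS_ge k) (by positivity)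
      have h2 : ((M ^ k / n : ℝ)) ^ ((1 : ℝ) / k) = M / (n : ℝ) ^ ((1 : ℝ) / k) := by
        rw [Real.div_rpow (by positivity) (le_of_lt hnpos)]
        congr 1
        rw [← Real.rpow_natCast M k, ← Real.rpow_mul hM0, mul_one_div, div_self hk0,
          Real.rpow_one]
      rw [h2] at h1
      exact h1
    have hden : Tendsto (fun k : ℕ => (n : ℝ) ^ ((1 : ℝ) / k)) atTop (𝓝 1) := by
      have h := Filter.Tendsto.rpow (tendsto_const_nhds (x := (n : ℝ)) (f := atTop))
        tendsto_one_div_atTop_nhds_zero_nat (Or.inl (ne_of_gt hnpos))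
      simpa using h
    have hglim : Tendsto (fun k : ℕ => M / (n : ℝ) ^ ((1 : ℝ) / k)) atTop (𝓝 M) := by
      have := Tendsto.div (tendsto_const_nhds (x := M) (f := atTop)) hden one_ne_zero
      simpa [Pi.div_def] using this
    exact tendsto_of_tendsto_of_tendsto_of_le_of_le' hglim tendsto_const_nhds hlb hub
end

section
/- Let Φ = (G, φ) be a connected complex unit gain graph on n vertices and C = diag(c₁, …, c_n) any invertible complex diagonal matrix. Then the largest Laplacian eigenvalue satisfies λ_n(Φ) ≤ max over vertices v_i of ( d_i + Σ_{v_j : v_i ∼ v_j} |c_j|/|c_i| ). -/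
open Matrix BigOperators

/-- Gershgorin-type bound: for any nonzero weights `c i`, the largest gain Laplacian
eigenvalue is at most `max_i (d_i + Σ_{v_j ∼ v_i} |c_j|/|c_i|)`. -/
theorem largest_eigenvalue_diagonal_similarity_bound {n : ℕ}
    (G : SimpleGraph (Fin n)) [DecidableRel G.Adj]
    (A : Matrix (Fin n) (Fin n) ℂ)
    (hsym : ∀ i j, A j i = star (A i j))
    (hunit : ∀ i j, G.Adj i j → ‖A i j‖ = 1)
    (hzero : ∀ i j, ¬ G.Adj i j → A i j = 0)
    (L : Matrix (Fin n) (Fin n) ℂ)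
    (hLdef : L = Matrix.diagonal (fun i => (G.degree i : ℂ)) - A)
    (hL : L.IsHermitian)
    (hconn : G.Connected)
    (c : Fin n → ℂ) (hc : ∀ i, c i ≠ 0) :
    ∀ k, hL.eigenvalues k ≤
      ⨆ i, ((G.degree i : ℝ) +
        ∑ j ∈ G.neighborFinset i, ‖c j‖ / ‖c i‖) := by
  intro k
  set μ : ℝ := hL.eigenvalues k with hμ
  set v : Fin n → ℂ := ⇑(hL.eigenvectorBasis k) with hv
  have hev : L *ᵥ v = fun i => (μ : ℂ) * v i := by
    have h := hL.mulVec_eigenvectorBasis k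
    funext i
    have := congrFun h i
    simpa [hv, Complex.real_smul] using this
  have hvne : v ≠ 0 := fun h => hL.eigenvectorBasis.orthonormal.ne_zero k (by ext i; exact congrFun h i)
  -- the ratio function
  set t : Fin n → ℝ := fun i => ‖v i‖ / ‖c i‖ with ht
  obtain ⟨i₀, -, hmax⟩ := Finset.exists_max_image Finset.univ t ⟨k, Finset.mem_univ k⟩
  have hcpos : ∀ i, 0 < ‖c i‖ := fun i => by
    simpa [norm_pos_iff] using hc i
  have hvi₀ : v i₀ ≠ 0 := by
    intro h0
    apply hvne
    funext j
    have hj : t j ≤ t i₀ := hmax j (Finset.mem_univ j)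
    have : t i₀ = 0 := by simp [ht, h0]
    have htj : t j ≤ 0 := this ▸ hj
    have : ‖v j‖ ≤ 0 := by
      have := (div_nonpos_iff.mp htj)
      rcases this with ⟨h1, h2⟩ | ⟨h1, h2⟩
      · exact absurd h2 (not_le.mpr (hcpos j))
      · exact h1
    simpa using le_antisymm this (norm_nonneg _)
  have hvi₀pos : 0 < ‖v i₀‖ := by
    simpa [norm_pos_iff] using hvi₀
  -- row equation at i₀
  have hrow : ((μ : ℂ) - (G.degree i₀ : ℂ)) * v i₀ = -(∑ j, A i₀ j * v j) := by
    have h1 : (L *ᵥ v) i₀ = (μ : ℂ) * v i₀ := congrFun hev i₀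
    rw [hLdef] at h1
    have h2 : ((Matrix.diagonal (fun i => (G.degree i : ℂ)) - A) *ᵥ v) i₀
        = (G.degree i₀ : ℂ) * v i₀ - ∑ j, A i₀ j * v j := by
      rw [Matrix.sub_mulVec]
      simp only [Matrix.mulVec, dotProduct, Pi.sub_apply]
      congr 1
      rw [Finset.sum_eq_single i₀]
      · rw [Matrix.diagonal_apply_eq]
      · intro b _ hb
        rw [Matrix.diagonal_apply_ne _ (Ne.symm hb), zero_mul]
      · simp
    rw [h2] at h1
    linear_combination -h1
  -- abs bound
  have habs : |μ - (G.degree i₀ : ℝ)| * ‖v i₀‖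
      ≤ ∑ j ∈ G.neighborFinset i₀, ‖v j‖ := by
    have h1 : ‖((μ : ℂ) - (G.degree i₀ : ℂ)) * v i₀‖
        = |μ - (G.degree i₀ : ℝ)| * ‖v i₀‖ := by
      rw [norm_mul]
      congr 1
      rw [show ((μ : ℂ) - (G.degree i₀ : ℂ)) = ((μ - (G.degree i₀ : ℝ) : ℝ) : ℂ) by push_cast; ring]
      rw [Complex.norm_real, Real.norm_eq_abs]
    calc |μ - (G.degree i₀ : ℝ)| * ‖v i₀‖
        = ‖-(∑ j, A i₀ j * v j)‖ := by rw [← h1, hrow]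
      _ = ‖∑ j, A i₀ j * v j‖ := by rw [norm_neg]
      _ ≤ ∑ j, ‖A i₀ j * v j‖ := norm_sum_le _ _
      _ = ∑ j ∈ G.neighborFinset i₀, ‖A i₀ j * v j‖ := by
          refine (Finset.sum_subset (Finset.subset_univ _) ?_).symm
          intro x _ hx
          rw [hzero i₀ x (by simpa [SimpleGraph.mem_neighborFinset] using hx)]
          simp
      _ = ∑ j ∈ G.neighborFinset i₀, ‖v j‖ := by
          refine Finset.sum_congr rfl fun j hj => ?_
          rw [norm_mul, hunit i₀ j (by simpa [SimpleGraph.mem_neighborFinset] using hj), one_mul]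
  -- compare v j with c j
  have hsum : ∑ j ∈ G.neighborFinset i₀, ‖v j‖
      ≤ (∑ j ∈ G.neighborFinset i₀, ‖c j‖ / ‖c i₀‖) * ‖v i₀‖ := by
    rw [Finset.sum_mul]
    refine Finset.sum_le_sum fun j _ => ?_
    have hj : t j ≤ t i₀ := hmax j (Finset.mem_univ j)
    have h1 : ‖v j‖ / ‖c j‖ ≤ ‖v i₀‖ / ‖c i₀‖ := hj
    calc ‖v j‖
        = (‖v j‖ / ‖c j‖) * ‖c j‖ :=
          (div_mul_cancel₀ _ (ne_of_gt (hcpos j))).symm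
      _ ≤ (‖v i₀‖ / ‖c i₀‖) * ‖c j‖ := by
          exact mul_le_mul_of_nonneg_right h1 (norm_nonneg _)
      _ = ‖c j‖ / ‖c i₀‖ * ‖v i₀‖ := by ring
  have hfinal : μ ≤ (G.degree i₀ : ℝ)
      + ∑ j ∈ G.neighborFinset i₀, ‖c j‖ / ‖c i₀‖ := by
    have h1 : |μ - (G.degree i₀ : ℝ)| * ‖v i₀‖
        ≤ (∑ j ∈ G.neighborFinset i₀, ‖c j‖ / ‖c i₀‖) * ‖v i₀‖ :=
      le_trans habs hsum
    have h2 : |μ - (G.degree i₀ : ℝ)|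
        ≤ ∑ j ∈ G.neighborFinset i₀, ‖c j‖ / ‖c i₀‖ :=
      le_of_mul_le_mul_right (by linarith [h1]) hvi₀pos
    have h3 : μ - (G.degree i₀ : ℝ) ≤ |μ - (G.degree i₀ : ℝ)| := le_abs_self _
    linarith
  exact le_trans hfinal (le_ciSup (f := fun i => ((G.degree i : ℝ) +
    ∑ j ∈ G.neighborFinset i, ‖c j‖ / ‖c i‖))
    (Set.Finite.bddAbove (Set.finite_range _)) i₀)
end

section
/- Let Φ be a complex unit gain graph on n ≥ 2 vertices with gain Laplacian L. For every positive integer k, λ_n(Φ) ≥ ( Tr(L^k)/n + √( (n·Tr(L^{2k}) − Tr(L^k)²)/(n²(n−1)) ) )^{1/k}, and the right-hand side converges to λ_n(Φ) as k → ∞. -/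
open Matrix BigOperators Filter Topology

lemma aux_trace_pow {n : ℕ} {L : Matrix (Fin n) (Fin n) ℂ} (hL : L.IsHermitian) (k : ℕ) :
    ((L ^ k).trace).re = ∑ i, (hL.eigenvalues i) ^ k := by
  set U : Matrix (Fin n) (Fin n) ℂ := (hL.eigenvectorUnitary : Matrix (Fin n) (Fin n) ℂ) with hU
  set D : Matrix (Fin n) (Fin n) ℂ := Matrix.diagonal (RCLike.ofReal ∘ hL.eigenvalues) with hD
  have hU1 : star U * U = 1 := Matrix.mem_unitaryGroup_iff'.mp hL.eigenvectorUnitary.2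
  have hU2 : U * star U = 1 := Matrix.mem_unitaryGroup_iff.mp hL.eigenvectorUnitary.2
  have hspec : L = U * D * star U := hL.spectral_theorem
  have hpow : L ^ k = U * D ^ k * star U := by
    induction k with
    | zero => simpa using hU2.symm
    | succ m ih =>
      rw [pow_succ, ih, hspec, pow_succ]
      rw [show U * D ^ m * star U * (U * D * star U) =
        U * D ^ m * (star U * U) * D * star U from by noncomm_ring]
      rw [hU1]; noncomm_ring
  rw [hpow, Matrix.trace_mul_cycle, hU1, Matrix.one_mul,
    hD, Matrix.diagonal_pow, Matrix.trace_diagonal]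
  rw [Complex.re_sum]
  congr 1; ext i
  simp [← Complex.ofReal_pow]


lemma aux_quad {n : ℕ} (G : SimpleGraph (Fin n)) [DecidableRel G.Adj]
    (A : Matrix (Fin n) (Fin n) ℂ)
    (hsym : ∀ i j, A j i = star (A i j))
    (hunit : ∀ i j, G.Adj i j → ‖A i j‖ = 1)
    (hzero : ∀ i j, ¬ G.Adj i j → A i j = 0)
    (x : Fin n → ℂ) :
    0 ≤ (star x ⬝ᵥ ((Matrix.diagonal (fun i => (G.degree i : ℂ)) - A) *ᵥ x)).re := by
  classical
  set w : Fin n → Fin n → ℂ := fun i j => (starRingEnd ℂ) (x i) * A i j * x j with hw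
  -- pointwise identity on edges
  have pt : ∀ i j, G.Adj i j → Complex.normSq (x i - A i j * x j)
      = Complex.normSq (x i) + Complex.normSq (x j) - ((w i j).re + (w j i).re) := by
    intro i j hij
    have h1 : Complex.normSq (A i j) = 1 := by
      rw [← Complex.sq_norm, hunit i j hij]; norm_num
    have h2 : w j i = (starRingEnd ℂ) (w i j) := by
      simp only [hw, _root_.map_mul, Complex.conj_conj, hsym i j, Complex.star_def]
      ring
    rw [Complex.normSq_sub, Complex.normSq_mul, h1, one_mul, h2, Complex.conj_re]
    have h3 : x i * (starRingEnd ℂ) (A i j * x j) = (starRingEnd ℂ) (w i j) := by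
      simp only [hw, _root_.map_mul, Complex.conj_conj]; ring
    rw [h3, Complex.conj_re]
    ring
  -- the LHS quadratic form
  have hdot : (star x ⬝ᵥ ((Matrix.diagonal (fun i => (G.degree i : ℂ)) - A) *ᵥ x)).re
      = (∑ i, (G.degree i : ℝ) * Complex.normSq (x i))
        - ∑ i, ∑ j, (if G.Adj i j then (w i j).re else 0) := by
    rw [sub_mulVec, dotProduct_sub, Complex.sub_re]
    congr 1
    · rw [dotProduct, Complex.re_sum]
      refine Finset.sum_congr rfl fun i _ => ?_
      rw [mulVec_diagonal]
      have : star x i * ((G.degree i : ℂ) * x i)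
          = (G.degree i : ℂ) * ((Complex.normSq (x i) : ℝ) : ℂ) := by
        simp only [Pi.star_apply, Complex.star_def]
        rw [show (starRingEnd ℂ) (x i) * ((G.degree i : ℂ) * x i)
          = (G.degree i : ℂ) * (x i * (starRingEnd ℂ) (x i)) from by ring, Complex.mul_conj]
      rw [this]
      simp
    · rw [dotProduct, Complex.re_sum]
      refine Finset.sum_congr rfl fun i _ => ?_
      rw [Matrix.mulVec, dotProduct, Finset.mul_sum, Complex.re_sum]
      refine Finset.sum_congr rfl fun j _ => ?_
      by_cases hij : G.Adj i j
      · simp only [hij, if_true, hw]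
        congr 1
        simp only [Pi.star_apply, Complex.star_def]
        ring
      · simp [hij, hzero i j hij]
  -- degree as a sum
  have hdeg : ∀ i, (G.degree i : ℝ) = ∑ j, (if G.Adj i j then (1:ℝ) else 0) := by
    intro i
    simp [SimpleGraph.degree, SimpleGraph.neighborFinset_eq_filter, Finset.sum_boole]
  -- key identity
  have key : 2 * (star x ⬝ᵥ ((Matrix.diagonal (fun i => (G.degree i : ℂ)) - A) *ᵥ x)).re
      = ∑ i, ∑ j, (if G.Adj i j then Complex.normSq (x i - A i j * x j) else 0) := by
    have hR : ∑ i, ∑ j, (if G.Adj i j then Complex.normSq (x i - A i j * x j) else 0)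
        = ∑ i, ∑ j, (if G.Adj i j then
            (Complex.normSq (x i) + Complex.normSq (x j) - ((w i j).re + (w j i).re)) else 0) := by
      refine Finset.sum_congr rfl fun i _ => Finset.sum_congr rfl fun j _ => ?_
      by_cases hij : G.Adj i j
      · simp only [hij, if_true, pt i j hij]
      · simp [hij]
    rw [hR, hdot]
    have split : ∀ i j, (if G.Adj i j then
          (Complex.normSq (x i) + Complex.normSq (x j) - ((w i j).re + (w j i).re)) else 0)
        = ((if G.Adj i j then Complex.normSq (x i) else 0)
          + (if G.Adj i j then Complex.normSq (x j) else 0))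
          - ((if G.Adj i j then (w i j).re else 0) + (if G.Adj i j then (w j i).re else 0)) := by
      intro i j; by_cases hij : G.Adj i j <;> simp [hij]
    simp only [split, Finset.sum_sub_distrib, Finset.sum_add_distrib]
    have c1 : ∑ i, ∑ j, (if G.Adj i j then Complex.normSq (x j) else 0)
        = ∑ i, ∑ j, (if G.Adj i j then Complex.normSq (x i) else 0) := by
      rw [Finset.sum_comm]
      exact Finset.sum_congr rfl fun i _ => Finset.sum_congr rfl fun j _ =>
        if_congr (G.adj_comm _ _) rfl rfl
    have c2 : ∑ i, ∑ j, (if G.Adj i j then (w j i).re else 0)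
        = ∑ i, ∑ j, (if G.Adj i j then (w i j).re else 0) := by
      rw [Finset.sum_comm]
      exact Finset.sum_congr rfl fun i _ => Finset.sum_congr rfl fun j _ =>
        if_congr (G.adj_comm _ _) rfl rfl
    have c3 : ∑ i, ∑ j, (if G.Adj i j then Complex.normSq (x i) else 0)
        = ∑ i, (G.degree i : ℝ) * Complex.normSq (x i) := by
      refine Finset.sum_congr rfl fun i _ => ?_
      rw [hdeg i, Finset.sum_mul]
      refine Finset.sum_congr rfl fun j _ => ?_
      by_cases hij : G.Adj i j <;> simp [hij]
    rw [c1, c2, c3]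
    ring
  have pos : 0 ≤ ∑ i, ∑ j, (if G.Adj i j then Complex.normSq (x i - A i j * x j) else 0) :=
    Finset.sum_nonneg fun i _ => Finset.sum_nonneg fun j _ => by
      by_cases h : G.Adj i j <;> simp [h, Complex.normSq_nonneg]
  linarith [key ▸ pos]


lemma aux_stat {n : ℕ} (hn : 2 ≤ n) (x : Fin n → ℝ) (M : ℝ)
    (hub : ∀ i, x i ≤ M) (i0 : Fin n) (hM0 : x i0 = M) :
    (∑ i, x i) / n + Real.sqrt ((n * ∑ i, (x i)^2 - (∑ i, x i)^2) / ((n:ℝ)^2 * (n-1))) ≤ M := by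
  have hnR : (2:ℝ) ≤ n := by exact_mod_cast hn
  have hn0 : (0:ℝ) < n := by linarith
  have hn1 : (0:ℝ) < (n:ℝ) - 1 := by linarith
  set T1 := ∑ i, x i with hT1
  set T2 := ∑ i, (x i)^2 with hT2
  obtain ⟨i1, -, hi1⟩ := Finset.exists_min_image Finset.univ x ⟨i0, Finset.mem_univ i0⟩
  set m := x i1 with hm
  -- identity
  have h1 : ∑ i, (M - x i) * (T1 - n * x i) = n * T2 - T1^2 := by
    have e : ∀ i, (M - x i) * (T1 - n * x i)
        = M*T1 - (n*M)*(x i) - T1*(x i) + n*((x i)^2) := fun i => by ring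
    simp only [e, Finset.sum_add_distrib, Finset.sum_sub_distrib, ← Finset.mul_sum,
      Finset.sum_const, Finset.card_univ, Fintype.card_fin, nsmul_eq_mul, ← hT1, ← hT2]
    ring
  have hmT : n * m ≤ T1 := by
    have : ∑ _i : Fin n, m ≤ T1 := Finset.sum_le_sum fun i _ => hi1 i (Finset.mem_univ i)
    simpa using this
  have hMT : T1 ≤ n * M := by
    have : T1 ≤ ∑ _i : Fin n, M := Finset.sum_le_sum fun i _ => hub i
    simpa using this
  -- T1 ≤ m + (n-1) M
  have hT1ub : T1 ≤ m + ((n:ℝ) - 1) * M := by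
    have hsplit : T1 = x i1 + ∑ i ∈ Finset.univ.erase i1, x i :=
      (Finset.add_sum_erase _ x (Finset.mem_univ i1)).symm
    have hb : ∑ i ∈ Finset.univ.erase i1, x i ≤ ∑ _i ∈ Finset.univ.erase i1, M :=
      Finset.sum_le_sum fun i _ => hub i
    have hcard : ((Finset.univ.erase i1).card : ℝ) = (n:ℝ) - 1 := by
      rw [Finset.card_erase_of_mem (Finset.mem_univ i1)]
      simp [Finset.card_univ]
      rw [Nat.cast_sub (by omega)]
      simp
    rw [hsplit]
    rw [Finset.sum_const, nsmul_eq_mul, hcard] at hb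
    linarith
  -- main bound
  have hbd : n * T2 - T1^2 ≤ ((n:ℝ) - 1) * (n*M - T1)^2 := by
    have step1 : ∑ i, (M - x i) * (T1 - n * x i) ≤ ∑ i, (M - x i) * (T1 - n * m) :=
      Finset.sum_le_sum fun i _ => mul_le_mul_of_nonneg_left
        (by have := hi1 i (Finset.mem_univ i); nlinarith) (by linarith [hub i])
    have step2 : ∑ i, (M - x i) * (T1 - n * m) = (n*M - T1) * (T1 - n*m) := by
      rw [← Finset.sum_mul]
      congr 1
      simp only [Finset.sum_sub_distrib, Finset.sum_const, Finset.card_univ, Fintype.card_fin,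
        nsmul_eq_mul, ← hT1]
    have step3 : T1 - n*m ≤ ((n:ℝ) - 1) * (n*M - T1) := by nlinarith
    have hge : 0 ≤ n*M - T1 := by linarith
    nlinarith [h1]
  have hsq : Real.sqrt ((n * T2 - T1^2) / ((n:ℝ)^2 * ((n:ℝ)-1))) ≤ (n*M - T1)/n := by
    have hfrac : (n * T2 - T1^2) / ((n:ℝ)^2 * ((n:ℝ)-1)) ≤ ((n*M - T1)/n)^2 := by
      rw [div_pow, div_le_div_iff₀ (by positivity) (by positivity)]
      nlinarith [hbd]
    calc Real.sqrt ((n * T2 - T1^2) / ((n:ℝ)^2 * ((n:ℝ)-1)))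
        ≤ Real.sqrt (((n*M - T1)/n)^2) := Real.sqrt_le_sqrt hfrac
      _ = (n*M - T1)/n := Real.sqrt_sq (div_nonneg (by linarith) hn0.le)
  have : T1 / n + (n*M - T1)/n = M := by field_simp; ring
  linarith [hsq]

/-- Trace bound for the largest gain Laplacian eigenvalue: for every `k ≥ 1`,
`λ_n(Φ) ≥ (Tr(L^k)/n + √((n·Tr(L^{2k}) − Tr(L^k)²)/(n²(n−1))))^{1/k}`, and the
right-hand side converges to `λ_n(Φ)` as `k → ∞`. -/
theorem largest_eigenvalue_trace_bound {n : ℕ}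
    (G : SimpleGraph (Fin n)) [DecidableRel G.Adj]
    (A : Matrix (Fin n) (Fin n) ℂ)
    (hsym : ∀ i j, A j i = star (A i j))
    (hunit : ∀ i j, G.Adj i j → ‖A i j‖ = 1)
    (hzero : ∀ i j, ¬ G.Adj i j → A i j = 0)
    (L : Matrix (Fin n) (Fin n) ℂ)
    (hLdef : L = Matrix.diagonal (fun i => (G.degree i : ℂ)) - A)
    (hL : L.IsHermitian)
    (hn : 2 ≤ n) :
    (∀ k : ℕ, 1 ≤ k →
      (((L ^ k).trace.re / n +
        Real.sqrt ((n * (L ^ (2 * k)).trace.re - ((L ^ k).trace.re) ^ 2) /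
          ((n : ℝ) ^ 2 * (n - 1)))) ^ ((1 : ℝ) / k)) ≤ ⨆ j, hL.eigenvalues j) ∧
    Tendsto (fun k : ℕ =>
        ((L ^ k).trace.re / n +
          Real.sqrt ((n * (L ^ (2 * k)).trace.re - ((L ^ k).trace.re) ^ 2) /
            ((n : ℝ) ^ 2 * (n - 1)))) ^ ((1 : ℝ) / k)) atTop
      (𝓝 (⨆ j, hL.eigenvalues j)) := by
  have hnR : (2:ℝ) ≤ n := by exact_mod_cast hn
  have hn0 : (0:ℝ) < n := by linarith
  have : Nonempty (Fin n) := ⟨⟨0, by omega⟩⟩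
  -- eigenvalues are nonnegative
  have heig : ∀ i, 0 ≤ hL.eigenvalues i := by
    intro i
    rw [hL.eigenvalues_eq]
    have hq := aux_quad G A hsym hunit hzero (hL.eigenvectorBasis i)
    rw [← hLdef] at hq
    simpa using hq
  -- the largest eigenvalue
  obtain ⟨j0, hj0⟩ := Finite.exists_max hL.eigenvalues
  set μ : ℝ := ⨆ j, hL.eigenvalues j with hμdef
  have hμ : μ = hL.eigenvalues j0 :=
    le_antisymm (ciSup_le hj0) (le_ciSup (Finite.bddAbove_range _) j0)
  have hμ0 : 0 ≤ μ := hμ ▸ heig j0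
  -- notation for the expression
  set F : ℕ → ℝ := fun k => (L ^ k).trace.re / n +
      Real.sqrt ((n * (L ^ (2 * k)).trace.re - ((L ^ k).trace.re) ^ 2) /
        ((n : ℝ) ^ 2 * (n - 1))) with hF
  have htr : ∀ k : ℕ, ((L ^ k).trace).re = ∑ i, (hL.eigenvalues i) ^ k := aux_trace_pow hL
  -- upper bound: F k ≤ μ ^ k
  have hub : ∀ k : ℕ, F k ≤ μ ^ k := by
    intro k
    have := aux_stat hn (fun i => hL.eigenvalues i ^ k) (μ ^ k)
      (fun i => pow_le_pow_left₀ (heig i) (hμ ▸ hj0 i) k) j0 (by rw [hμ])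
    have h2k : ∑ i, hL.eigenvalues i ^ (2*k) = ∑ i, ((fun i => hL.eigenvalues i ^ k) i)^2 :=
      Finset.sum_congr rfl fun i _ => by rw [← pow_mul, mul_comm]
    simp only [hF]
    rw [htr k, htr (2*k), h2k]
    exact this
  -- lower bound: μ ^ k / n ≤ F k
  have hlb : ∀ k : ℕ, μ ^ k / n ≤ F k := by
    intro k
    have h1 : μ ^ k ≤ ((L ^ k).trace).re := by
      rw [htr k, hμ]
      exact Finset.single_le_sum (f := fun i => hL.eigenvalues i ^ k)
        (fun i _ => pow_nonneg (heig i) k) (Finset.mem_univ j0)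
    have h2 : 0 ≤ Real.sqrt ((n * (L ^ (2 * k)).trace.re - ((L ^ k).trace.re) ^ 2) /
        ((n : ℝ) ^ 2 * (n - 1))) := Real.sqrt_nonneg _
    have : μ ^ k / n ≤ ((L ^ k).trace).re / n := by
      gcongr
    simp only [hF]; linarith
  have hF0 : ∀ k, 0 ≤ F k := fun k => le_trans (by positivity) (hlb k)
  have hP1 : ∀ k : ℕ, 1 ≤ k → F k ^ ((1:ℝ)/k) ≤ μ := by
    intro k hk
    have hk0 : (k:ℝ) ≠ 0 := Nat.cast_ne_zero.mpr (by omega)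
    calc F k ^ ((1:ℝ)/k) ≤ (μ ^ k) ^ ((1:ℝ)/k) :=
        Real.rpow_le_rpow (hF0 k) (hub k) (by positivity)
      _ = μ := by
        rw [← Real.rpow_natCast μ k, ← Real.rpow_mul hμ0, mul_one_div, div_self hk0,
          Real.rpow_one]
  refine ⟨hP1, ?_⟩
  have hupper : ∀ᶠ k : ℕ in atTop, F k ^ ((1:ℝ)/k) ≤ μ := by
    filter_upwards [eventually_ge_atTop 1] with k hk using hP1 k hk
  have hlower : ∀ᶠ k : ℕ in atTop, μ / (n:ℝ) ^ ((1:ℝ)/k) ≤ F k ^ ((1:ℝ)/k) := by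
    filter_upwards [eventually_ge_atTop 1] with k hk
    have hk0 : (k:ℝ) ≠ 0 := Nat.cast_ne_zero.mpr (by omega)
    have hmono : (μ ^ k / n) ^ ((1:ℝ)/k) ≤ F k ^ ((1:ℝ)/k) :=
      Real.rpow_le_rpow (by positivity) (hlb k) (by positivity)
    calc μ / (n:ℝ) ^ ((1:ℝ)/k) = (μ ^ k / n) ^ ((1:ℝ)/k) := by
          rw [Real.div_rpow (by positivity) hn0.le, ← Real.rpow_natCast μ k,
            ← Real.rpow_mul hμ0, mul_one_div, div_self hk0, Real.rpow_one]
      _ ≤ F k ^ ((1:ℝ)/k) := hmono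
  have h1 : Tendsto (fun k : ℕ => (n:ℝ) ^ ((1:ℝ)/(k:ℝ))) atTop (𝓝 1) := by
    have h := Filter.Tendsto.rpow
      (tendsto_const_nhds : Tendsto (fun _ : ℕ => (n:ℝ)) atTop (𝓝 (n:ℝ)))
      tendsto_one_div_atTop_nhds_zero_nat (Or.inl hn0.ne')
    simpa using h
  have h2 : Tendsto (fun k : ℕ => μ / (n:ℝ) ^ ((1:ℝ)/(k:ℝ))) atTop (𝓝 μ) := by
    have := (tendsto_const_nhds : Tendsto (fun _ : ℕ => μ) atTop (𝓝 μ)).div h1 one_ne_zero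
    rw [div_one] at this; exact this
  exact tendsto_of_tendsto_of_tendsto_of_le_of_le' h2 tendsto_const_nhds hlower hupper
end
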